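/- arXiv:2312.03975 — 5 statements merged into one kernel-verified Lean document; each statement's English description precedes it below -/
import Mathlib

section
/- Let wt : points(V) → ℝ on an n-dimensional F_q-vector space V (n ≥ 2) be such that every line has total weight in {0,1}, and suppose every point has weight in {-1/(q²+q), 0, 1/(q+1), 1/q}. If L is a line containing a point of weight 0, then every point of L has weight 0 or 1/q, and L contains either exactly 1 or exactly q+1 points of weight 0. -/
open Module

/-- The total weight of the points of a subspace `L`. -/
noncomputable def subWeight {F V : Type} [Field F] [AddCommGroup V] [Module F V]
    (wt : Submodule F V → ℝ) (L : Submodule F V) : ℝ :=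
  ∑ᶠ P ∈ {P : Submodule F V | finrank F P = 1 ∧ P ≤ L}, wt P

lemma aux_line_equiv {F V : Type} [Field F] [AddCommGroup V] [Module F V]
    (L : Submodule F V) (hL : finrank F L = 2) :
    Nonempty (Option F ≃ {P : Submodule F V // finrank F P = 1 ∧ P ≤ L}) := by
  have : FiniteDimensional F L := FiniteDimensional.of_finrank_eq_succ hL
  let b : Basis (Fin 2) F L := finBasisOfFinrankEq F L hL
  set v0 : V := (b 0 : V) with hv0def
  set v1 : V := (b 1 : V) with hv1def
  have h01 : ∀ s t : F, s • v0 + t • v1 = 0 → s = 0 ∧ t = 0 := by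
    intro s t h
    have h' : s • (b 0) + t • (b 1) = (0 : L) := by
      apply Subtype.coe_injective
      simpa using h
    have key := Fintype.linearIndependent_iff.mp b.linearIndependent ![s, t]
      (by simpa [Fin.sum_univ_two] using h')
    exact ⟨key 0, key 1⟩
  have hv1 : v1 ≠ 0 := by
    intro h
    have := (h01 0 1 (by simp [h])).2
    simp at this
  have hvt : ∀ t : F, v0 + t • v1 ≠ 0 := by
    intro t h
    exact one_ne_zero (h01 1 t (by simpa using h)).1
  have hspan : Submodule.span F {v0, v1} = L := by
    rw [← Submodule.map_subtype_top L, ← b.span_eq, Submodule.map_span]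
    congr 1
    rw [show (L.subtype '' Set.range b) = Set.range fun i => (b i : V) from
      (Set.range_comp _ b).symm]
    ext y
    simp [Fin.exists_fin_two, hv0def, hv1def, eq_comm]
  have hmem0 : v0 ∈ L := (b 0).2
  have hmem1 : v1 ∈ L := (b 1).2
  let f : Option F → {P : Submodule F V // finrank F P = 1 ∧ P ≤ L} := fun o =>
    match o with
    | none => ⟨Submodule.span F {v1}, finrank_span_singleton hv1, by
        rw [Submodule.span_le, Set.singleton_subset_iff]; exact hmem1⟩
    | some t => ⟨Submodule.span F {v0 + t • v1}, finrank_span_singleton (hvt t), by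
        rw [Submodule.span_le, Set.singleton_subset_iff]
        exact L.add_mem hmem0 (L.smul_mem t hmem1)⟩
  have hinj : Function.Injective f := by
    intro o1 o2 h
    rw [Subtype.ext_iff] at h
    match o1, o2 with
    | none, none => rfl
    | none, some t =>
      exfalso
      have h' : Submodule.span F {v1} = Submodule.span F {v0 + t • v1} := h
      have hm : v0 + t • v1 ∈ Submodule.span F {v1} := by
        rw [h']; exact Submodule.mem_span_singleton_self _
      obtain ⟨c, hc⟩ := Submodule.mem_span_singleton.mp hm
      have : (1 : F) • v0 + (t - c) • v1 = 0 := by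
        linear_combination (norm := module) -hc
      exact one_ne_zero (h01 1 (t - c) this).1
    | some t, none =>
      exfalso
      have h' : Submodule.span F {v0 + t • v1} = Submodule.span F {v1} := h
      have hm : v0 + t • v1 ∈ Submodule.span F {v1} := by
        rw [← h']; exact Submodule.mem_span_singleton_self _
      obtain ⟨c, hc⟩ := Submodule.mem_span_singleton.mp hm
      have : (1 : F) • v0 + (t - c) • v1 = 0 := by
        linear_combination (norm := module) -hc
      exact one_ne_zero (h01 1 (t - c) this).1
    | some t, some t' =>
      have h' : Submodule.span F {v0 + t • v1} = Submodule.span F {v0 + t' • v1} := h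
      have hm : v0 + t • v1 ∈ Submodule.span F {v0 + t' • v1} := by
        rw [← h']; exact Submodule.mem_span_singleton_self _
      obtain ⟨c, hc⟩ := Submodule.mem_span_singleton.mp hm
      have hkey : (c - 1) • v0 + (c * t' - t) • v1 = 0 := by
        linear_combination (norm := module) hc
      obtain ⟨hc1, hc2⟩ := h01 _ _ hkey
      have hc1' : c = 1 := sub_eq_zero.mp hc1
      congr 1
      have h2 : c * t' = t := sub_eq_zero.mp hc2
      rw [hc1', one_mul] at h2
      exact h2.symm
  have hsurj : Function.Surjective f := by
    rintro ⟨P, hP1, hPL⟩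
    have : FiniteDimensional F P := FiniteDimensional.of_finrank_eq_succ hP1
    obtain ⟨w, hw⟩ : P.IsPrincipal :=
      (Submodule.finrank_le_one_iff_isPrincipal P).mp (le_of_eq hP1)
    have hw0 : w ≠ 0 := by
      rintro rfl
      rw [Submodule.span_zero_singleton] at hw
      rw [hw] at hP1
      simp at hP1
    have hwL : w ∈ L := hPL (hw ▸ Submodule.mem_span_singleton_self w)
    have hwspan : w ∈ Submodule.span F {v0, v1} := hspan ▸ hwL
    obtain ⟨s, t, hst⟩ := Submodule.mem_span_pair.mp hwspan
    by_cases hs : s = 0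
    · refine ⟨none, ?_⟩
      apply Subtype.ext
      have ht : t ≠ 0 := by
        intro h
        apply hw0
        rw [← hst, hs, h, zero_smul, zero_smul, add_zero]
      show Submodule.span F {v1} = P
      rw [hw]
      have : w = t • v1 := by rw [← hst, hs, zero_smul, zero_add]
      rw [this, Submodule.span_singleton_smul_eq (IsUnit.mk0 t ht)]
    · refine ⟨some (s⁻¹ * t), ?_⟩
      apply Subtype.ext
      show Submodule.span F {v0 + (s⁻¹ * t) • v1} = P
      rw [hw]
      have : w = s • (v0 + (s⁻¹ * t) • v1) := by
        rw [smul_add, smul_smul, ← mul_assoc, mul_inv_cancel₀ hs, one_mul, hst]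
      rw [this, Submodule.span_singleton_smul_eq (IsUnit.mk0 s hs)]
  exact ⟨Equiv.ofBijective f ⟨hinj, hsurj⟩⟩


lemma aux_arith (q a b c d s : ℕ) (hq : 2 ≤ q) (hb : 1 ≤ b) (htot : a + b + c + d = q + 1)
    (hs : s ≤ 1) (heq : c * q + d * (q + 1) = a + s * (q * (q + 1))) :
    (a = 0 ∧ c = 0 ∧ d = 0 ∧ b = q + 1) ∨ (a = 0 ∧ c = 0 ∧ d = q ∧ b = 1) := by
  interval_cases s
  · -- total weight 0
    left
    rw [Nat.zero_mul, Nat.add_zero] at heq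
    have ha : a ≤ q := by omega
    have hd : d = 0 := by
      by_contra h
      have h1 : 1 ≤ d := Nat.pos_of_ne_zero h
      have h2 : q + 1 ≤ d * (q + 1) := Nat.le_mul_of_pos_left (q + 1) h1
      have h3 : 0 ≤ c * q := Nat.zero_le _
      linarith
    have hc : c = 0 := by
      by_contra h
      have h1 : 1 ≤ c := Nat.pos_of_ne_zero h
      have h2 : q ≤ c * q := Nat.le_mul_of_pos_left q h1
      have h4 : a ≤ q - 1 := by omega
      have h5 : 0 ≤ d * (q+1) := Nat.zero_le _
      have : c * q ≤ a := by linarith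
      omega
    have hA : a = 0 := by
      rw [hd, hc] at heq
      simpa using heq.symm
    exact ⟨hA, hc, hd, by omega⟩
  · -- total weight 1
    right
    rw [Nat.one_mul] at heq
    have hcd : c + d ≤ q := by omega
    have h2 : (c + d) * q ≤ q * q := Nat.mul_le_mul_right q hcd
    have hd_le : d ≤ q := by omega
    have heq' : c * q + d * q + d = a + (q * q + q) := by
      have e1 : c * q + d * (q + 1) = c * q + d * q + d := by ring
      have e2 : a + q * (q + 1) = a + (q * q + q) := by ring
      rw [e1, e2] at heq
      exact heq
    have h3 : (c + d) * q = c * q + d * q := by ring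
    have hA : a = 0 := by linarith
    have hc : c = 0 := by
      by_contra h
      have h1 : 1 ≤ c := Nat.pos_of_ne_zero h
      have h4 : d + 1 ≤ q := by omega
      -- from heq', a = 0 : c*q + d*q + d = q*q+q, and c*q+d*q ≤ q*q so d ≥ q
      have h5 : q ≤ d := by linarith
      linarith
    have hd : d = q := by
      rw [hA, hc] at heq
      simp only [Nat.zero_mul, Nat.zero_add, Nat.add_zero] at heq
      exact Nat.eq_of_mul_eq_mul_right (show 0 < q + 1 by omega) heq
    exact ⟨hA, hc, hd, by omega⟩

/-- If every line has weight in `{0,1}` and all point weights lie in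
`{-1/(q²+q), 0, 1/(q+1), 1/q}`, then a line through a weight-`0` point has all its
points of weight `0` or `1/q` and contains exactly `1` or exactly `q+1` points of
weight `0`. -/
theorem stmt_5 (q n : ℕ) (F V : Type) [Field F] [Fintype F] (hq : Fintype.card F = q)
    [AddCommGroup V] [Module F V] (hn : 2 ≤ n) (hdim : finrank F V = n)
    (wt : Submodule F V → ℝ)
    (hline : ∀ L : Submodule F V, finrank F L = 2 →
      subWeight wt L = 0 ∨ subWeight wt L = 1)
    (hwts : ∀ P : Submodule F V, finrank F P = 1 →
      wt P = -(1 / (q ^ 2 + q : ℝ)) ∨ wt P = 0 ∨ wt P = 1 / ((q : ℝ) + 1) ∨ wt P = 1 / (q : ℝ))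
    (L : Submodule F V) (hL : finrank F L = 2)
    (P₀ : Submodule F V) (hP₀ : finrank F P₀ = 1) (hP₀L : P₀ ≤ L) (hP₀w : wt P₀ = 0) :
    (∀ P : Submodule F V, finrank F P = 1 → P ≤ L → wt P = 0 ∨ wt P = 1 / (q : ℝ)) ∧
    (Nat.card {P : Submodule F V // finrank F P = 1 ∧ P ≤ L ∧ wt P = 0} = 1 ∨
     Nat.card {P : Submodule F V // finrank F P = 1 ∧ P ≤ L ∧ wt P = 0} = q + 1) := by
  classical
  have hq2 : 2 ≤ q := by rw [← hq]; exact Fintype.one_lt_card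
  obtain ⟨e⟩ := aux_line_equiv L hL
  have hfin : Finite {P : Submodule F V // finrank F P = 1 ∧ P ≤ L} := Finite.of_equiv _ e
  have hS : ({P : Submodule F V | finrank F P = 1 ∧ P ≤ L}).Finite :=
    Set.finite_coe_iff.mp hfin
  set S : Finset (Submodule F V) := hS.toFinset with hSdef
  have hcardS : S.card = q + 1 := by
    have h1 : Nat.card {P : Submodule F V // finrank F P = 1 ∧ P ≤ L} = q + 1 := by
      rw [← Nat.card_congr e, Nat.card_eq_fintype_card, Fintype.card_option, hq]
    rw [← Nat.card_eq_card_finite_toFinset hS]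
    exact h1
  have hsub : subWeight wt L = ∑ P ∈ S, wt P := by
    rw [subWeight]
    exact finsum_mem_eq_finite_toFinset_sum _ hS
  -- the four possible values
  set w1 : ℝ := -(1 / (q ^ 2 + q : ℝ)) with hw1def
  set w3 : ℝ := 1 / ((q : ℝ) + 1) with hw3def
  set w4 : ℝ := 1 / (q : ℝ) with hw4def
  have hqR : (2 : ℝ) ≤ (q : ℝ) := by exact_mod_cast hq2
  have h1pos : (0 : ℝ) < 1 / ((q : ℝ) ^ 2 + q) := by positivity
  have hw1neg : w1 < 0 := by rw [hw1def]; linarith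
  have hw3pos : 0 < w3 := by rw [hw3def]; positivity
  have hw4pos : 0 < w4 := by rw [hw4def]; positivity
  have hw34 : w3 < w4 := by
    rw [hw3def, hw4def]
    apply one_div_lt_one_div_of_lt <;> linarith
  set A : Finset (Submodule F V) := S.filter (fun P => wt P = w1) with hAdef
  set B : Finset (Submodule F V) := S.filter (fun P => wt P = 0) with hBdef
  set C : Finset (Submodule F V) := S.filter (fun P => wt P = w3) with hCdef
  set D : Finset (Submodule F V) := S.filter (fun P => wt P = w4) with hDdef
  have hdAB : Disjoint A B := by
    rw [Finset.disjoint_left]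
    intro P hA hB
    have h1 := (Finset.mem_filter.mp hA).2
    have h2 := (Finset.mem_filter.mp hB).2
    rw [h1] at h2; linarith
  have hdAC : Disjoint A C := by
    rw [Finset.disjoint_left]
    intro P hA hC
    have h1 := (Finset.mem_filter.mp hA).2
    have h2 := (Finset.mem_filter.mp hC).2
    rw [h1] at h2; linarith
  have hdAD : Disjoint A D := by
    rw [Finset.disjoint_left]
    intro P hA hD
    have h1 := (Finset.mem_filter.mp hA).2
    have h2 := (Finset.mem_filter.mp hD).2
    rw [h1] at h2; linarith
  have hdBC : Disjoint B C := by
    rw [Finset.disjoint_left]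
    intro P hB hC
    have h1 := (Finset.mem_filter.mp hB).2
    have h2 := (Finset.mem_filter.mp hC).2
    rw [h1] at h2; linarith
  have hdBD : Disjoint B D := by
    rw [Finset.disjoint_left]
    intro P hB hD
    have h1 := (Finset.mem_filter.mp hB).2
    have h2 := (Finset.mem_filter.mp hD).2
    rw [h1] at h2; linarith
  have hdCD : Disjoint C D := by
    rw [Finset.disjoint_left]
    intro P hC hD
    have h1 := (Finset.mem_filter.mp hC).2
    have h2 := (Finset.mem_filter.mp hD).2
    rw [h1] at h2; linarith
  have hd1 : Disjoint (A ∪ B) C := Finset.disjoint_union_left.mpr ⟨hdAC, hdBC⟩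
  have hd2 : Disjoint (A ∪ B ∪ C) D :=
    Finset.disjoint_union_left.mpr ⟨Finset.disjoint_union_left.mpr ⟨hdAD, hdBD⟩, hdCD⟩
  have hcover : S = A ∪ B ∪ C ∪ D := by
    ext P
    simp only [Finset.mem_union, hAdef, hBdef, hCdef, hDdef, Finset.mem_filter]
    constructor
    · intro h
      have hP1 : finrank F P = 1 := (hS.mem_toFinset.mp h).1
      rcases hwts P hP1 with h1 | h1 | h1 | h1 <;> tauto
    · tauto
  have hcard : A.card + B.card + C.card + D.card = q + 1 := by
    rw [← hcardS, hcover, Finset.card_union_of_disjoint hd2,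
      Finset.card_union_of_disjoint hd1, Finset.card_union_of_disjoint hdAB]
  have hsumval : ∑ P ∈ S, wt P = A.card * w1 + C.card * w3 + D.card * w4 := by
    rw [hcover, Finset.sum_union hd2, Finset.sum_union hd1, Finset.sum_union hdAB]
    have hA : ∑ P ∈ A, wt P = A.card * w1 := by
      rw [Finset.sum_congr rfl (fun P hP => (Finset.mem_filter.mp hP).2),
        Finset.sum_const, nsmul_eq_mul]
    have hB : ∑ P ∈ B, wt P = 0 :=
      Finset.sum_eq_zero fun P hP => (Finset.mem_filter.mp hP).2
    have hC : ∑ P ∈ C, wt P = C.card * w3 := by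
      rw [Finset.sum_congr rfl (fun P hP => (Finset.mem_filter.mp hP).2),
        Finset.sum_const, nsmul_eq_mul]
    have hD : ∑ P ∈ D, wt P = D.card * w4 := by
      rw [Finset.sum_congr rfl (fun P hP => (Finset.mem_filter.mp hP).2),
        Finset.sum_const, nsmul_eq_mul]
    rw [hA, hB, hC, hD]; ring
  have hbpos : 1 ≤ B.card := by
    have hPB : P₀ ∈ B := Finset.mem_filter.mpr ⟨hS.mem_toFinset.mpr ⟨hP₀, hP₀L⟩, hP₀w⟩
    exact Finset.card_pos.mpr ⟨P₀, hPB⟩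
  obtain ⟨s, hs1, hseq⟩ : ∃ s : ℕ, s ≤ 1 ∧
      (A.card : ℝ) * w1 + C.card * w3 + D.card * w4 = s := by
    rcases hline L hL with h | h
    · exact ⟨0, by norm_num, by rw [← hsumval, ← hsub, h]; norm_num⟩
    · exact ⟨1, le_refl 1, by rw [← hsumval, ← hsub, h]; norm_num⟩
  have hq0 : (q : ℝ) ≠ 0 := by linarith
  have hq1 : (q : ℝ) + 1 ≠ 0 := by linarith
  have hqq : (q : ℝ) ^ 2 + q ≠ 0 := by nlinarith
  have hnat : C.card * q + D.card * (q + 1) = A.card + s * (q * (q + 1)) := by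
    have hR : ((C.card : ℝ) * q + D.card * (q + 1)) = A.card + s * (q * (q + 1)) := by
      rw [hw1def, hw3def, hw4def] at hseq
      field_simp at hseq
      apply mul_left_cancel₀ hqq
      linear_combination ((q : ℝ) ^ 2 + q) * hseq
    exact_mod_cast hR
  obtain ⟨ha, hc, hd, hb⟩ | ⟨ha, hc, hd, hb⟩ :=
    aux_arith q A.card B.card C.card D.card s hq2 hbpos hcard hs1 hnat
  all_goals {
    have hAempty : A = ∅ := Finset.card_eq_zero.mp ha
    have hCempty : C = ∅ := Finset.card_eq_zero.mp hc
    have hcount : Nat.card {P : Submodule F V // finrank F P = 1 ∧ P ≤ L ∧ wt P = 0}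
        = B.card := by
      have e2 : {P : Submodule F V // finrank F P = 1 ∧ P ≤ L ∧ wt P = 0}
          ≃ {P : Submodule F V // P ∈ B} := Equiv.subtypeEquivRight (fun P => by
        rw [hBdef, Finset.mem_filter, hS.mem_toFinset]
        simp only [Set.mem_setOf_eq]
        tauto)
      rw [Nat.card_congr e2, Nat.card_eq_finsetCard]
    constructor
    · intro P h1 h2
      have hPS : P ∈ S := hS.mem_toFinset.mpr ⟨h1, h2⟩
      rcases hwts P h1 with h | h | h | h
      · exfalso
        have : P ∈ A := Finset.mem_filter.mpr ⟨hPS, h⟩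
        rw [hAempty] at this
        exact Finset.notMem_empty P this
      · exact Or.inl h
      · exfalso
        have : P ∈ C := Finset.mem_filter.mpr ⟨hPS, h⟩
        rw [hCempty] at this
        exact Finset.notMem_empty P this
      · exact Or.inr h
    · rw [hcount, hb]
      tauto
  }
end

section
/- Let wt : points(V) → ℝ on an n-dimensional F_q-vector space V (n ≥ 4) be such that every line has total weight in {0,1}, and suppose every point has weight in {0, 1/q}. Then the set S of points of weight 0 is a (possibly empty or full) subspace, and moreover either all points have weight 0, or S is the set of points of a hyperplane and all points outside have weight 1/q. -/
open Module

section Aux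
variable {F V : Type} [Field F] [AddCommGroup V] [Module F V] [FiniteDimensional F V]

lemma point_span {P : Submodule F V} (hP : finrank F P = 1) {x : V} (hx : x ∈ P)
    (hx0 : x ≠ 0) : Submodule.span F {x} = P := by
  apply Submodule.eq_of_le_of_finrank_eq
  · exact (Submodule.span_singleton_le_iff_mem _ _).2 hx
  · rw [finrank_span_singleton hx0, hP]

omit [FiniteDimensional F V] in
lemma point_ne_bot {P : Submodule F V} (hP : finrank F P = 1) : ∃ x ∈ P, x ≠ 0 := by
  rw [← Submodule.ne_bot_iff]
  intro h
  rw [h, finrank_bot] at hP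
  exact absurd hP (by norm_num)

lemma points_inf_bot {P Q : Submodule F V} (hP : finrank F P = 1) (hQ : finrank F Q = 1)
    (hne : P ≠ Q) : P ⊓ Q = ⊥ := by
  rw [Submodule.eq_bot_iff]
  intro x hx
  by_contra hx0
  exact hne ((point_span hP hx.1 hx0).symm.trans (point_span hQ hx.2 hx0))

lemma line_of_points {P Q : Submodule F V} (hP : finrank F P = 1) (hQ : finrank F Q = 1)
    (hne : P ≠ Q) : finrank F ↥(P ⊔ Q) = 2 := by
  have := Submodule.finrank_sup_add_finrank_inf_eq P Q
  rw [points_inf_bot hP hQ hne, finrank_bot, hP, hQ] at this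
  omega

end Aux

section Count
variable {F V : Type} [Field F] [Fintype F] [AddCommGroup V] [Module F V]
  [FiniteDimensional F V] [Fintype V] [Fintype (Submodule F V)]

open Finset in
lemma card_line_points (L : Submodule F V) (hL : finrank F L = 2)
    [DecidablePred fun P : Submodule F V => finrank F P = 1 ∧ P ≤ L] :
    (Finset.univ.filter fun P : Submodule F V => finrank F P = 1 ∧ P ≤ L).card
      = Fintype.card F + 1 := by
  classical
  set q := Fintype.card F with hqdef
  have hq2 : 2 ≤ q := Fintype.one_lt_card
  set pts := Finset.univ.filter fun P : Submodule F V => finrank F P = 1 ∧ P ≤ L with hpts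
  have hcardsub : ∀ (W : Submodule F V), ((W : Set V).toFinset.erase 0).card
      = q ^ finrank F W - 1 := by
    intro W
    rw [Finset.card_erase_of_mem (by simp [W.zero_mem]), Set.toFinset_card]
    congr 1
    exact card_eq_pow_finrank (K := F) (V := ↥W)
  have hunion : ((L : Set V).toFinset.erase 0)
      = pts.biUnion (fun P => (P : Set V).toFinset.erase 0) := by
    ext v
    simp only [Finset.mem_biUnion, Finset.mem_erase, Set.mem_toFinset, SetLike.mem_coe,
      hpts, Finset.mem_filter, Finset.mem_univ, true_and]
    constructor
    · rintro ⟨hv0, hvL⟩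
      exact ⟨Submodule.span F {v}, ⟨finrank_span_singleton hv0,
        (Submodule.span_singleton_le_iff_mem _ _).2 hvL⟩, hv0,
        Submodule.mem_span_singleton_self v⟩
    · rintro ⟨P, ⟨_, hPL⟩, hv0, hvP⟩
      exact ⟨hv0, hPL hvP⟩
  have hdisj : ∀ P ∈ pts, ∀ Q ∈ pts, P ≠ Q →
      Disjoint ((P : Set V).toFinset.erase 0) ((Q : Set V).toFinset.erase 0) := by
    intro P hP Q hQ hne
    simp only [hpts, Finset.mem_filter, Finset.mem_univ, true_and] at hP hQ
    rw [Finset.disjoint_left]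
    intro v hv hv'
    simp only [Finset.mem_erase, Set.mem_toFinset, SetLike.mem_coe] at hv hv'
    exact hne ((point_span hP.1 hv.2 hv.1).symm.trans (point_span hQ.1 hv'.2 hv'.1))
  have hbu := Finset.card_biUnion hdisj
  rw [← hunion, hcardsub, hL] at hbu
  have hsum : ∑ P ∈ pts, ((P : Set V).toFinset.erase 0).card = pts.card * (q - 1) := by
    rw [Finset.sum_congr rfl (fun P hP => by
      simp only [hpts, Finset.mem_filter, Finset.mem_univ, true_and] at hP
      rw [hcardsub, hP.1, pow_one]), Finset.sum_const, smul_eq_mul]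
  rw [hsum] at hbu
  have key : (q + 1) * (q - 1) = q ^ 2 - 1 := by
    obtain ⟨k, hk⟩ : ∃ k, q = k + 1 := ⟨q - 1, by omega⟩
    rw [hk]
    have h1 : (k + 1 + 1) * (k + 1 - 1) = k * k + 2 * k := by
      rw [Nat.add_sub_cancel]; ring
    have h2 : (k + 1) ^ 2 = k * k + 2 * k + 1 := by ring
    omega
  exact Nat.eq_of_mul_eq_mul_right (Nat.sub_pos_of_lt (lt_of_lt_of_le one_lt_two hq2))
    (hbu.symm.trans key.symm)

end Count

/-- If every line has weight in `{0,1}` and every point has weight `0` or `1/q`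
(`n ≥ 4`), then the weight-`0` points form a subspace, and either all points have
weight `0`, or the weight-`0` points are exactly the points of a hyperplane and all
other points have weight `1/q`. -/
theorem stmt_7 (q n : ℕ) (F V : Type) [Field F] [Fintype F] (hq : Fintype.card F = q)
    [AddCommGroup V] [Module F V] (hn : 4 ≤ n) (hdim : finrank F V = n)
    (wt : Submodule F V → ℝ)
    (hline : ∀ L : Submodule F V, finrank F L = 2 →
      subWeight wt L = 0 ∨ subWeight wt L = 1)
    (hwts : ∀ P : Submodule F V, finrank F P = 1 → wt P = 0 ∨ wt P = 1 / (q : ℝ)) :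
    (∃ W : Submodule F V, ∀ P : Submodule F V, finrank F P = 1 → (wt P = 0 ↔ P ≤ W)) ∧
    ((∀ P : Submodule F V, finrank F P = 1 → wt P = 0) ∨
      ∃ H : Submodule F V, finrank F H = n - 1 ∧
        ∀ P : Submodule F V, finrank F P = 1 →
          (P ≤ H → wt P = 0) ∧ (¬ P ≤ H → wt P = 1 / (q : ℝ))) := by
  classical
  subst hq
  have hFD : FiniteDimensional F V := FiniteDimensional.of_finrank_pos (by rw [hdim]; omega)
  have hFin : Finite V := Module.finite_of_finite F
  haveI : Fintype V := Fintype.ofFinite V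
  haveI : Finite (Submodule F V) :=
    Finite.of_injective (fun p : Submodule F V => (p : Set V)) SetLike.coe_injective
  haveI : Fintype (Submodule F V) := Fintype.ofFinite _
  have hq2 : 2 ≤ Fintype.card F := Fintype.one_lt_card
  have hqR : (0 : ℝ) < (Fintype.card F : ℝ) := by
    exact_mod_cast Nat.lt_of_lt_of_le Nat.zero_lt_two hq2
  set pts : Submodule F V → Finset (Submodule F V) :=
    fun L => Finset.univ.filter fun P => finrank F P = 1 ∧ P ≤ L with hptsdef
  have hmem : ∀ L P, P ∈ pts L ↔ finrank F P = 1 ∧ P ≤ L := by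
    intro L P; simp [hptsdef]
  have hsubW : ∀ L : Submodule F V, subWeight wt L = ∑ P ∈ pts L, wt P := by
    intro L
    have hset : {P : Submodule F V | finrank F P = 1 ∧ P ≤ L} = ↑(pts L) := by
      ext P; simp [hptsdef]
    rw [subWeight, hset, finsum_mem_coe_finset]
  have hcard : ∀ L : Submodule F V, finrank F L = 2 → (pts L).card = Fintype.card F + 1 :=
    fun L hL => card_line_points L hL
  have hnn : ∀ L : Submodule F V, ∀ P ∈ pts L, 0 ≤ wt P := by
    intro L P hP
    rcases hwts P ((hmem L P).1 hP).1 with h | h <;> rw [h] <;> positivity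
  -- Fact A : a line with two distinct weight-0 points has all points of weight 0
  have factA : ∀ L : Submodule F V, finrank F L = 2 → ∀ P₁ P₂, P₁ ∈ pts L → P₂ ∈ pts L → P₁ ≠ P₂ →
      wt P₁ = 0 → wt P₂ = 0 → ∀ P ∈ pts L, wt P = 0 := by
    intro L hL P₁ P₂ h1 h2 hne w1 w2
    have hbound : subWeight wt L ≤
        ((Fintype.card F : ℝ) - 1) / (Fintype.card F : ℝ) := by
      rw [hsubW]
      have h2' : P₂ ∈ (pts L).erase P₁ := Finset.mem_erase.2 ⟨hne.symm, h2⟩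
      rw [← Finset.sum_erase _ w1, ← Finset.sum_erase _ w2]
      have hb : ∀ P ∈ ((pts L).erase P₁).erase P₂, wt P ≤ 1 / (Fintype.card F : ℝ) := by
        intro P hP
        have hP' := Finset.mem_of_mem_erase (Finset.mem_of_mem_erase hP)
        rcases hwts P ((hmem L P).1 hP').1 with h | h <;> rw [h]
        · positivity
      have hcard2 : (((pts L).erase P₁).erase P₂).card = Fintype.card F - 1 := by
        rw [Finset.card_erase_of_mem h2', Finset.card_erase_of_mem h1, hcard L hL]
        omega
      calc ∑ P ∈ ((pts L).erase P₁).erase P₂, wt P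
          ≤ (((pts L).erase P₁).erase P₂).card • (1 / (Fintype.card F : ℝ)) :=
            Finset.sum_le_card_nsmul _ _ _ hb
        _ = ((Fintype.card F : ℝ) - 1) / (Fintype.card F : ℝ) := by
            rw [hcard2, nsmul_eq_mul, Nat.cast_sub (by omega)]
            push_cast; ring
    have hz : subWeight wt L = 0 := by
      rcases hline L hL with h | h
      · exact h
      · exfalso
        rw [h] at hbound
        have : ((Fintype.card F : ℝ) - 1) / (Fintype.card F : ℝ) < 1 := by
          rw [div_lt_one hqR]; linarith
        linarith
    rw [hsubW] at hz
    intro P hP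
    exact (Finset.sum_eq_zero_iff_of_nonneg (hnn L)).1 hz P hP
  -- Fact B : every line has a weight-0 point
  have factB : ∀ L : Submodule F V, finrank F L = 2 → ∃ P ∈ pts L, wt P = 0 := by
    intro L hL
    by_contra hc
    push_neg at hc
    have hall : ∀ P ∈ pts L, wt P = 1 / (Fintype.card F : ℝ) := by
      intro P hP
      rcases hwts P ((hmem L P).1 hP).1 with h | h
      · exact absurd h (hc P hP)
      · exact h
    have hval : subWeight wt L = ((Fintype.card F : ℝ) + 1) / (Fintype.card F : ℝ) := by
      rw [hsubW, Finset.sum_congr rfl hall, Finset.sum_const, hcard L hL, nsmul_eq_mul]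
      push_cast; ring
    rcases hline L hL with h | h <;> rw [hval] at h
    · rw [div_eq_zero_iff] at h
      rcases h with h | h <;> [linarith; linarith]
    · rw [div_eq_one_iff_eq (ne_of_gt hqR)] at h
      linarith
  -- key closure property
  have key2 : ∀ u v : V, u ≠ 0 → v ≠ 0 → wt (Submodule.span F {u}) = 0 →
      wt (Submodule.span F {v}) = 0 →
      u + v = 0 ∨ wt (Submodule.span F {u + v}) = 0 := by
    intro u v hu hv wu wv
    by_cases hs : u + v = 0
    · exact Or.inl hs
    right
    have hu1 : finrank F (Submodule.span F {u}) = 1 := finrank_span_singleton hu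
    have hv1 : finrank F (Submodule.span F {v}) = 1 := finrank_span_singleton hv
    by_cases heq : Submodule.span F {u} = Submodule.span F {v}
    · have hm : u + v ∈ Submodule.span F {u} :=
        add_mem (Submodule.mem_span_singleton_self u)
          (heq ▸ Submodule.mem_span_singleton_self v)
      rw [point_span hu1 hm hs]
      exact wu
    · set L := Submodule.span F {u} ⊔ Submodule.span F {v} with hLdef
      have hL2 : finrank F L = 2 := line_of_points hu1 hv1 heq
      have huL : u ∈ L := Submodule.mem_sup_left (Submodule.mem_span_singleton_self u)
      have hvL : v ∈ L := Submodule.mem_sup_right (Submodule.mem_span_singleton_self v)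
      exact factA L hL2 _ _ ((hmem _ _).2 ⟨hu1, le_sup_left⟩)
        ((hmem _ _).2 ⟨hv1, le_sup_right⟩) heq wu wv _
        ((hmem _ _).2 ⟨finrank_span_singleton hs,
          (Submodule.span_singleton_le_iff_mem _ _).2 (add_mem huL hvL)⟩)
  -- the subspace of weight-0 vectors
  let W : Submodule F V :=
    { carrier := {v | v = 0 ∨ wt (Submodule.span F {v}) = 0}
      zero_mem' := Or.inl rfl
      add_mem' := by
        intro a b ha hb
        simp only [Set.mem_setOf_eq] at ha hb ⊢
        by_cases ha0 : a = 0
        · subst ha0; simpa using hb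
        by_cases hb0 : b = 0
        · subst hb0; simpa using ha
        exact key2 a b ha0 hb0 (ha.resolve_left ha0) (hb.resolve_left hb0)
      smul_mem' := by
        rintro c v (rfl | hv)
        · exact Or.inl (smul_zero c)
        · by_cases hc : c = 0
          · exact Or.inl (by rw [hc, zero_smul])
          · exact Or.inr (by
              rw [show Submodule.span F {c • v} = Submodule.span F {v} from
                Submodule.span_singleton_smul_eq (isUnit_iff_ne_zero.2 hc) v]
              exact hv) }
  have hWmem : ∀ v : V, v ∈ W ↔ v = 0 ∨ wt (Submodule.span F {v}) = 0 := fun v => Iff.rfl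
  have hW : ∀ P : Submodule F V, finrank F P = 1 → (wt P = 0 ↔ P ≤ W) := by
    intro P hP
    constructor
    · intro h0 x hx
      rw [hWmem]
      by_cases hx0 : x = 0
      · exact Or.inl hx0
      · exact Or.inr (by rw [point_span hP hx hx0]; exact h0)
    · intro hPW
      obtain ⟨v, hvP, hv0⟩ := point_ne_bot hP
      rcases (hWmem v).1 (hPW hvP) with h | h
      · exact absurd h hv0
      · rw [← point_span hP hvP hv0]; exact h
  refine ⟨⟨W, hW⟩, ?_⟩
  by_cases htop : W = ⊤
  · exact Or.inl fun P hP => (hW P hP).2 (htop ▸ le_top)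
  right
  have hWrank : finrank F W = n - 1 := by
    by_contra hr
    have hlt : finrank F W < n := hdim ▸ Submodule.finrank_lt htop
    obtain ⟨v, -, hvW⟩ := SetLike.exists_of_lt (show W < ⊤ from lt_top_iff_ne_top.2 htop)
    have hv0 : v ≠ 0 := fun h => hvW (h ▸ W.zero_mem)
    have hinf : W ⊓ Submodule.span F {v} = ⊥ := by
      rw [Submodule.eq_bot_iff]
      rintro x ⟨hxW, hxv⟩
      obtain ⟨c, rfl⟩ := Submodule.mem_span_singleton.1 hxv
      by_contra hx0
      have hc : c ≠ 0 := fun h => hx0 (by rw [h, zero_smul])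
      refine hvW ?_
      have := W.smul_mem c⁻¹ hxW
      rwa [smul_smul, inv_mul_cancel₀ hc, one_smul] at this
    have hW' : finrank F ↥(W ⊔ Submodule.span F {v}) = finrank F W + 1 := by
      have := Submodule.finrank_sup_add_finrank_inf_eq W (Submodule.span F {v})
      rw [hinf, finrank_bot, finrank_span_singleton hv0] at this
      omega
    have hW'top : W ⊔ Submodule.span F {v} ≠ ⊤ := by
      intro h
      rw [h, finrank_top, hdim] at hW'
      exact hr (by omega)
    obtain ⟨u, -, huW'⟩ := SetLike.exists_of_lt (show W ⊔ Submodule.span F {v} < ⊤ from lt_top_iff_ne_top.2 hW'top)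
    have hu0 : u ≠ 0 := fun h => huW' (h ▸ Submodule.zero_mem _)
    have hneq : Submodule.span F {u} ≠ Submodule.span F {v} := by
      intro h
      exact huW' (le_sup_right (a := W) (h ▸ Submodule.mem_span_singleton_self u))
    set L := Submodule.span F {u} ⊔ Submodule.span F {v} with hLdef
    have hL2 : finrank F L = 2 :=
      line_of_points (finrank_span_singleton hu0) (finrank_span_singleton hv0) hneq
    obtain ⟨P, hPL, hP0⟩ := factB L hL2
    obtain ⟨hP1, hPle⟩ := (hmem L P).1 hPL
    have hPW : P ≤ W := (hW P hP1).1 hP0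
    obtain ⟨w, hwP, hw0⟩ := point_ne_bot hP1
    have hwL : w ∈ L := hPle hwP
    have hwW : w ∈ W := hPW hwP
    obtain ⟨x, hx, y, hy, hxy⟩ := Submodule.mem_sup.1 hwL
    obtain ⟨a, rfl⟩ := Submodule.mem_span_singleton.1 hx
    obtain ⟨b, rfl⟩ := Submodule.mem_span_singleton.1 hy
    by_cases ha : a = 0
    · rw [ha, zero_smul, zero_add] at hxy
      have hb : b ≠ 0 := fun h => hw0 (by rw [← hxy, h, zero_smul])
      refine hvW ?_
      have := W.smul_mem b⁻¹ (hxy ▸ hwW)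
      rwa [smul_smul, inv_mul_cancel₀ hb, one_smul] at this
    · apply huW'
      have h1 : w - b • v ∈ W ⊔ Submodule.span F {v} :=
        sub_mem (Submodule.mem_sup_left hwW)
          (Submodule.mem_sup_right
            (Submodule.smul_mem _ b (Submodule.mem_span_singleton_self v)))
      have h2 : a • u = w - b • v := eq_sub_of_add_eq hxy
      have h3 := Submodule.smul_mem _ a⁻¹ h1
      rw [← h2, smul_smul, inv_mul_cancel₀ ha, one_smul] at h3
      exact h3
  refine ⟨W, hWrank, fun P hP => ⟨fun h => (hW P hP).2 h, fun h => ?_⟩⟩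
  rcases hwts P hP with h0 | h1
  · exact absurd ((hW P hP).1 h0) h
  · exact h1
end

section
/- Let wt : points(V) → ℝ on an n-dimensional F_q-vector space (n ≥ 4) with every line-weight in {0,1}. If every point weight lies in {-1/(q²+q), 0, 1/(q+1), 1/q}, then the corresponding family Y of weight-1 lines is trivial: it is one of ∅, all lines, the lines in a hyperplane, the lines through a point, a point-pencil union hyperplane lines, or a complement of these. -/
set_option linter.unusedSectionVars false
set_option maxHeartbeats 1600000


open Module

/-- The set of all lines (2-spaces). -/
def allLines (F V : Type) [Field F] [AddCommGroup V] [Module F V] : Set (Submodule F V) :=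
  {L | finrank F L = 2}

/-- The point-pencil of a point `P`: all lines through `P`. -/
def pencil {F V : Type} [Field F] [AddCommGroup V] [Module F V] (P : Submodule F V) :
    Set (Submodule F V) :=
  {L | finrank F L = 2 ∧ P ≤ L}

/-- The lines contained in a subspace `H`. -/
def linesIn {F V : Type} [Field F] [AddCommGroup V] [Module F V] (H : Submodule F V) :
    Set (Submodule F V) :=
  {L | finrank F L = 2 ∧ L ≤ H}

/-- The trivial examples of Boolean degree 1 functions on lines: `∅`, a point-pencil,
the lines of a hyperplane, the union of a point-pencil and the lines of a hyperplane
not containing the point, and complements (within all lines) of these. -/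
def IsTrivialCL {F V : Type} [Field F] [AddCommGroup V] [Module F V]
    (Y : Set (Submodule F V)) : Prop :=
  ∃ Z : Set (Submodule F V),
    (Z = ∅ ∨
     (∃ P : Submodule F V, finrank F P = 1 ∧ Z = pencil P) ∨
     (∃ H : Submodule F V, finrank F H = finrank F V - 1 ∧ Z = linesIn H) ∨
     (∃ P H : Submodule F V, finrank F P = 1 ∧ finrank F H = finrank F V - 1 ∧
        ¬ P ≤ H ∧ Z = pencil P ∪ linesIn H)) ∧
    (Y = Z ∨ Y = allLines F V \ Z)

section Aux

open scoped Classical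

variable {F V : Type} [Field F] [Fintype F] [AddCommGroup V] [Module F V]
  [FiniteDimensional F V]

instance CL_finiteSub : Finite (Submodule F V) := by
  have : Finite V := Module.finite_of_finite F
  exact Finite.of_injective (fun P : Submodule F V => (P : Set V)) SetLike.coe_injective

/-- The points of `L` as a finset. -/
noncomputable def ptsFinset (L : Submodule F V) : Finset (Submodule F V) :=
  (Set.toFinite {P : Submodule F V | finrank F P = 1 ∧ P ≤ L}).toFinset

lemma mem_ptsFinset {L P : Submodule F V} :
    P ∈ ptsFinset L ↔ finrank F P = 1 ∧ P ≤ L := by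
  simp [ptsFinset]

lemma subWeight_eq_sum (wt : Submodule F V → ℝ) (L : Submodule F V) :
    subWeight wt L = ∑ P ∈ ptsFinset L, wt P := by
  rw [subWeight, finsum_mem_eq_finite_toFinset_sum _ (Set.toFinite _)]
  rfl

lemma point_eq_span {P : Submodule F V} (hP : finrank F P = 1) {v : V}
    (hv : v ∈ P) (h0 : v ≠ 0) : P = Submodule.span F {v} := by
  have hle : Submodule.span F {v} ≤ P := by
    rw [Submodule.span_singleton_le_iff_mem]; exact hv
  exact (Submodule.eq_of_le_of_finrank_le hle
    (by rw [hP, finrank_span_singleton h0])).symm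

lemma point_exists_ne_zero {P : Submodule F V} (hP : finrank F P = 1) :
    ∃ v ∈ P, v ≠ (0 : V) := by
  rw [← Submodule.ne_bot_iff]
  intro h
  rw [h, finrank_bot] at hP
  exact absurd hP (by norm_num)

lemma sup_points_line {P Q : Submodule F V} (hP : finrank F P = 1)
    (hQ : finrank F Q = 1) (hne : P ≠ Q) : finrank F (P ⊔ Q : Submodule F V) = 2 := by
  have h := Submodule.finrank_sup_add_finrank_inf_eq P Q
  have hinf : finrank F (P ⊓ Q : Submodule F V) ≤ 1 := by
    rw [← hP]; exact Submodule.finrank_mono inf_le_left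
  have hinfne : finrank F (P ⊓ Q : Submodule F V) ≠ 1 := by
    intro h1
    have hPQ : (P ⊓ Q : Submodule F V) = P :=
      Submodule.eq_of_le_of_finrank_le inf_le_left (by omega)
    have hQQ : (P ⊓ Q : Submodule F V) = Q :=
      Submodule.eq_of_le_of_finrank_le inf_le_right (by omega)
    exact hne (hPQ.symm.trans hQQ)
  omega

lemma card_submodule_set (W : Submodule F V) :
    haveI : Finite V := Module.finite_of_finite F
    letI : Fintype V := Fintype.ofFinite V
    (W : Set V).toFinset.card = Fintype.card F ^ finrank F W := by
  haveI : Finite V := Module.finite_of_finite F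
  letI : Fintype V := Fintype.ofFinite V
  rw [Set.toFinset_card]
  exact card_eq_pow_finrank

lemma card_ptsFinset {q : ℕ} (hqF : Fintype.card F = q) {L : Submodule F V}
    (hL : finrank F L = 2) : (ptsFinset L).card = q + 1 := by
  classical
  haveI : Finite V := Module.finite_of_finite F
  letI : Fintype V := Fintype.ofFinite V
  have hq2 : 2 ≤ q := hqF ▸ Fintype.one_lt_card
  set S : Finset (Submodule F V) := ptsFinset L with hS
  set T : Finset V := (L : Set V).toFinset.erase 0 with hT
  have hmemT : ∀ v : V, v ∈ T ↔ v ∈ L ∧ v ≠ 0 := by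
    intro v; simp [hT, and_comm]
  have hmap : ∀ v ∈ T, Submodule.span F {v} ∈ S := by
    intro v hv
    rw [hmemT] at hv
    rw [hS, mem_ptsFinset]
    exact ⟨finrank_span_singleton hv.2, by
      rw [Submodule.span_singleton_le_iff_mem]; exact hv.1⟩
  have hcount := Finset.card_eq_sum_card_fiberwise hmap
  have hfiber : ∀ P ∈ S, (T.filter (fun v => Submodule.span F {v} = P)).card = q - 1 := by
    intro P hP
    rw [hS, mem_ptsFinset] at hP
    have : T.filter (fun v => Submodule.span F {v} = P) = (P : Set V).toFinset.erase 0 := by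
      ext v
      simp only [Finset.mem_filter, Finset.mem_erase, Set.mem_toFinset, SetLike.mem_coe]
      rw [hmemT]
      constructor
      · rintro ⟨⟨hvL, hv0⟩, rfl⟩
        exact ⟨hv0, Submodule.mem_span_singleton_self v⟩
      · rintro ⟨hv0, hvP⟩
        exact ⟨⟨hP.2 hvP, hv0⟩, (point_eq_span hP.1 hvP hv0).symm⟩
    rw [this, Finset.card_erase_of_mem (by simp), card_submodule_set, hP.1, hqF, pow_one]
  have hTcard : T.card = q ^ 2 - 1 := by
    rw [hT, Finset.card_erase_of_mem (by simp), card_submodule_set, hL, hqF]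
  rw [Finset.sum_congr rfl hfiber, Finset.sum_const, smul_eq_mul] at hcount
  rw [hTcard] at hcount
  -- q^2 - 1 = S.card * (q-1)  ⇒  S.card = q+1
  have h1 : (q + 1) * (q - 1) = q ^ 2 - 1 := by
    have h2 : 1 ≤ q ^ 2 := by nlinarith
    zify [show 1 ≤ q by omega, h2]; ring
  have := hcount.symm.trans h1.symm
  have hq1 : 0 < q - 1 := by omega
  exact Nat.eq_of_mul_eq_mul_right hq1 this

end Aux


lemma CL_arith_nat0 {q a b c d : ℕ} (hq2 : 2 ≤ q) (hsum : a + b + c + d = q + 1)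
    (hn : a * (q + 1) + b * q = d) :
    (a = 0 ∧ b = 0 ∧ c = q + 1 ∧ d = 0) ∨ (a = 0 ∧ b = 1 ∧ c = 0 ∧ d = q) := by
  have key : a * (q + 2) + b * (q + 1) + c = q + 1 := by nlinarith [hn, hsum]
  have ha : a = 0 := by nlinarith [key]
  subst ha
  simp only [Nat.zero_mul, Nat.zero_add] at key hn
  have hb : b ≤ 1 := by nlinarith [key]
  interval_cases b
  · left; omega
  · right; omega

lemma CL_arith_nat1 {q a b c d : ℕ} (hq2 : 2 ≤ q) (hsum : a + b + c + d = q + 1)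
    (hn : a * (q + 1) + b * q = q * (q + 1) + d) :
    (a = 0 ∧ b = q + 1 ∧ c = 0 ∧ d = 0) ∨ (a = q ∧ b = 0 ∧ c = 1 ∧ d = 0) := by
  have hd : d = 0 := by
    by_contra hd0
    have hd1 : 1 ≤ d := Nat.one_le_iff_ne_zero.mpr hd0
    have hab : a + b ≤ q := by omega
    nlinarith [hn, hab]
  subst hd
  rw [Nat.add_zero] at hn
  have hdvd : q ∣ a := by
    have h1 : q ∣ a * (q + 1) + b * q := ⟨q + 1, by linarith [hn]⟩
    have h2 : q ∣ b * q := ⟨b, by ring⟩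
    have h3 : q ∣ a * (q + 1) := (Nat.dvd_add_iff_left h2).mpr h1
    have h4 : a * (q + 1) = a * q + a := by ring
    rw [h4] at h3
    exact (Nat.dvd_add_iff_right ⟨a, by ring⟩).mpr h3
  have haq : a ≤ q := by nlinarith [hn]
  rcases hdvd with ⟨k, hk⟩
  have hk1 : k = 0 ∨ k = 1 := by
    rcases Nat.lt_or_ge k 2 with h | h
    · omega
    · exfalso; nlinarith [hk, haq]
  rcases hk1 with rfl | rfl
  · left
    rw [Nat.mul_zero] at hk
    subst hk
    simp only [Nat.zero_mul, Nat.zero_add] at hn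
    have hbq : b * q = (q + 1) * q := by rw [hn]; ring
    have hb := Nat.eq_of_mul_eq_mul_right (show 0 < q by omega) hbq
    omega
  · right
    rw [Nat.mul_one] at hk
    have h0 : b * q = 0 := by rw [hk] at hn; linarith [hn]
    have hb : b = 0 := by
      rcases Nat.mul_eq_zero.mp h0 with h | h
      · exact h
      · omega
    omega

lemma CL_arith {q a b c d : ℕ} (hq2 : 2 ≤ q) (hsum : a + b + c + d = q + 1)
    (h : (a : ℝ) * (1 / q) + (b : ℝ) * (1 / ((q : ℝ) + 1)) + (c : ℝ) * 0 +
        (d : ℝ) * (-(1 / ((q : ℝ) ^ 2 + q))) = 0 ∨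
      (a : ℝ) * (1 / q) + (b : ℝ) * (1 / ((q : ℝ) + 1)) + (c : ℝ) * 0 +
        (d : ℝ) * (-(1 / ((q : ℝ) ^ 2 + q))) = 1) :
    (a = 0 ∧ b = 0 ∧ c = q + 1 ∧ d = 0) ∨ (a = 0 ∧ b = 1 ∧ c = 0 ∧ d = q) ∨
    (a = 0 ∧ b = q + 1 ∧ c = 0 ∧ d = 0) ∨ (a = q ∧ b = 0 ∧ c = 1 ∧ d = 0) := by
  have hq0 : (0 : ℝ) < q := by
    have : (2 : ℝ) ≤ q := by exact_mod_cast hq2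
    linarith
  have hq1 : (0 : ℝ) < (q : ℝ) + 1 := by linarith
  have hqq : ((q : ℝ) ^ 2 + q) = q * (q + 1) := by ring
  rcases h with h | h
  · have hr : (a : ℝ) * (q + 1) + b * q = d := by
      field_simp [hqq] at h
      linarith [h]
    have hn : a * (q + 1) + b * q = d := by exact_mod_cast hr
    rcases CL_arith_nat0 hq2 hsum hn with h | h
    · exact Or.inl h
    · exact Or.inr (Or.inl h)
  · have hr : (a : ℝ) * (q + 1) + b * q = q * (q + 1) + d := by
      field_simp [hqq] at h
      linarith [h]
    have hn : a * (q + 1) + b * q = q * (q + 1) + d := by exact_mod_cast hr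
    rcases CL_arith_nat1 hq2 hsum hn with h | h
    · exact Or.inr (Or.inr (Or.inl h))
    · exact Or.inr (Or.inr (Or.inr h))

section Shapes

open scoped Classical

variable {F V : Type} [Field F] [Fintype F] [AddCommGroup V] [Module F V]
  [FiniteDimensional F V]

lemma CL_line_shapes {q : ℕ} (hqF : Fintype.card F = q)
    (wt : Submodule F V → ℝ)
    (hwts : ∀ P : Submodule F V, finrank F P = 1 →
      wt P = -(1 / (q ^ 2 + q : ℝ)) ∨ wt P = 0 ∨ wt P = 1 / ((q : ℝ) + 1) ∨
        wt P = 1 / (q : ℝ))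
    {L : Submodule F V} (hL : finrank F L = 2)
    (hsum : subWeight wt L = 0 ∨ subWeight wt L = 1) :
    (subWeight wt L = 0 ∧ ∀ P : Submodule F V, finrank F P = 1 → P ≤ L → wt P = 0) ∨
    (subWeight wt L = 0 ∧ ∃ P₀ : Submodule F V, finrank F P₀ = 1 ∧ P₀ ≤ L ∧
        wt P₀ = 1 / ((q : ℝ) + 1) ∧ ∀ Q : Submodule F V, finrank F Q = 1 → Q ≤ L →
          Q ≠ P₀ → wt Q = -(1 / (q ^ 2 + q : ℝ))) ∨
    (subWeight wt L = 1 ∧ ∀ P : Submodule F V, finrank F P = 1 → P ≤ L →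
        wt P = 1 / ((q : ℝ) + 1)) ∨
    (subWeight wt L = 1 ∧ ∃ P₀ : Submodule F V, finrank F P₀ = 1 ∧ P₀ ≤ L ∧
        wt P₀ = 0 ∧ ∀ Q : Submodule F V, finrank F Q = 1 → Q ≤ L → Q ≠ P₀ →
          wt Q = 1 / (q : ℝ)) := by
  have hq2 : 2 ≤ q := hqF ▸ Fintype.one_lt_card
  have hqR : (2 : ℝ) ≤ (q : ℝ) := by exact_mod_cast hq2
  -- the four possible values, pairwise distinct
  set r1 : ℝ := -(1 / (q ^ 2 + q : ℝ)) with hr1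
  set r2 : ℝ := 0 with hr2
  set r3 : ℝ := 1 / ((q : ℝ) + 1) with hr3
  set r4 : ℝ := 1 / (q : ℝ) with hr4
  have hq0 : (0 : ℝ) < q := by linarith
  have h12 : r1 < r2 := by
    rw [hr1, hr2]; simp only [neg_lt, neg_zero]; positivity
  have h23 : r2 < r3 := by rw [hr2, hr3]; positivity
  have h34 : r3 < r4 := by
    rw [hr3, hr4]
    apply one_div_lt_one_div_of_lt hq0
    linarith
  set S : Finset (Submodule F V) := ptsFinset L with hS
  have hcard : S.card = q + 1 := card_ptsFinset hqF hL
  set Sa : Finset (Submodule F V) := S.filter (fun P => wt P = r4) with hSa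
  set Sb : Finset (Submodule F V) := S.filter (fun P => wt P = r3) with hSb
  set Sc : Finset (Submodule F V) := S.filter (fun P => wt P = r2) with hSc
  set Sd : Finset (Submodule F V) := S.filter (fun P => wt P = r1) with hSd
  have hcover : S = Sa ∪ (Sb ∪ (Sc ∪ Sd)) := by
    ext P
    simp only [hSa, hSb, hSc, hSd, Finset.mem_union, Finset.mem_filter]
    constructor
    · intro hP
      have h1 := (mem_ptsFinset.mp hP).1
      rcases hwts P h1 with h | h | h | h
      · exact Or.inr (Or.inr (Or.inr ⟨hP, h⟩))
      · exact Or.inr (Or.inr (Or.inl ⟨hP, h⟩))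
      · exact Or.inr (Or.inl ⟨hP, h⟩)
      · exact Or.inl ⟨hP, h⟩
    · rintro (⟨h, _⟩ | ⟨h, _⟩ | ⟨h, _⟩ | ⟨h, _⟩) <;> exact h
  have hdab : Disjoint Sa Sb := by
    rw [Finset.disjoint_left]
    intro P hPa hPb
    rw [hSa, Finset.mem_filter] at hPa
    rw [hSb, Finset.mem_filter] at hPb
    rw [hPa.2] at hPb
    linarith [hPb.2]
  have hdac : Disjoint Sa Sc := by
    rw [Finset.disjoint_left]
    intro P hPa hPb
    rw [hSa, Finset.mem_filter] at hPa
    rw [hSc, Finset.mem_filter] at hPb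
    rw [hPa.2] at hPb
    linarith [hPb.2]
  have hdad : Disjoint Sa Sd := by
    rw [Finset.disjoint_left]
    intro P hPa hPb
    rw [hSa, Finset.mem_filter] at hPa
    rw [hSd, Finset.mem_filter] at hPb
    rw [hPa.2] at hPb
    linarith [hPb.2]
  have hdbc : Disjoint Sb Sc := by
    rw [Finset.disjoint_left]
    intro P hPa hPb
    rw [hSb, Finset.mem_filter] at hPa
    rw [hSc, Finset.mem_filter] at hPb
    rw [hPa.2] at hPb
    linarith [hPb.2]
  have hdbd : Disjoint Sb Sd := by
    rw [Finset.disjoint_left]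
    intro P hPa hPb
    rw [hSb, Finset.mem_filter] at hPa
    rw [hSd, Finset.mem_filter] at hPb
    rw [hPa.2] at hPb
    linarith [hPb.2]
  have hdcd : Disjoint Sc Sd := by
    rw [Finset.disjoint_left]
    intro P hPa hPb
    rw [hSc, Finset.mem_filter] at hPa
    rw [hSd, Finset.mem_filter] at hPb
    rw [hPa.2] at hPb
    linarith [hPb.2]
  have hcards : Sa.card + (Sb.card + (Sc.card + Sd.card)) = q + 1 := by
    rw [← Finset.card_union_of_disjoint hdcd,
      ← Finset.card_union_of_disjoint (Finset.disjoint_union_right.mpr ⟨hdbc, hdbd⟩),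
      ← Finset.card_union_of_disjoint
        (Finset.disjoint_union_right.mpr ⟨hdab, Finset.disjoint_union_right.mpr ⟨hdac, hdad⟩⟩),
      ← hcover, hcard]
  have hsum_eq : subWeight wt L =
      (Sa.card : ℝ) * r4 + (Sb.card : ℝ) * r3 + (Sc.card : ℝ) * r2 + (Sd.card : ℝ) * r1 := by
    rw [subWeight_eq_sum, ← hS, hcover,
      Finset.sum_union (Finset.disjoint_union_right.mpr
        ⟨hdab, Finset.disjoint_union_right.mpr ⟨hdac, hdad⟩⟩),
      Finset.sum_union (Finset.disjoint_union_right.mpr ⟨hdbc, hdbd⟩),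
      Finset.sum_union hdcd]
    have ha : ∑ P ∈ Sa, wt P = (Sa.card : ℝ) * r4 := by
      rw [Finset.sum_congr rfl (fun P hP => (Finset.mem_filter.mp hP).2),
        Finset.sum_const, nsmul_eq_mul]
    have hb : ∑ P ∈ Sb, wt P = (Sb.card : ℝ) * r3 := by
      rw [Finset.sum_congr rfl (fun P hP => (Finset.mem_filter.mp hP).2),
        Finset.sum_const, nsmul_eq_mul]
    have hc : ∑ P ∈ Sc, wt P = (Sc.card : ℝ) * r2 := by
      rw [Finset.sum_congr rfl (fun P hP => (Finset.mem_filter.mp hP).2),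
        Finset.sum_const, nsmul_eq_mul]
    have hd : ∑ P ∈ Sd, wt P = (Sd.card : ℝ) * r1 := by
      rw [Finset.sum_congr rfl (fun P hP => (Finset.mem_filter.mp hP).2),
        Finset.sum_const, nsmul_eq_mul]
    rw [ha, hb, hc, hd]; ring
  have harith := CL_arith (a := Sa.card) (b := Sb.card) (c := Sc.card) (d := Sd.card)
    hq2 (by omega) (by
      rcases hsum with h | h
      · left; rw [hsum_eq] at h; rw [hr1, hr2, hr3, hr4] at h; linarith [h]
      · right; rw [hsum_eq] at h; rw [hr1, hr2, hr3, hr4] at h; linarith [h])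
  have hq0' : (q : ℝ) ≠ 0 := by linarith
  have hq1' : (q : ℝ) + 1 ≠ 0 := by linarith
  have hqq' : (q : ℝ) ^ 2 + q ≠ 0 := by positivity
  rcases harith with ⟨ha, hb, hc, hd⟩ | ⟨ha, hb, hc, hd⟩ | ⟨ha, hb, hc, hd⟩ | ⟨ha, hb, hc, hd⟩
  · -- all zero
    left
    have hW : subWeight wt L = 0 := by
      rw [hsum_eq, ha, hb, hd]; push_cast; ring
    refine ⟨hW, fun P h1 h2 => ?_⟩
    have hPS : P ∈ S := mem_ptsFinset.mpr ⟨h1, h2⟩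
    have : P ∈ Sc := by
      have hSceq : Sc = S := Finset.eq_of_subset_of_card_le (Finset.filter_subset _ _)
        (by omega)
      rw [hSceq]; exact hPS
    exact (Finset.mem_filter.mp this).2
  · -- one (q+1)-weight point, rest negative
    right; left
    have hW : subWeight wt L = 0 := by
      rw [hsum_eq, ha, hb, hc, hd, hr1, hr2, hr3, hr4]
      push_cast
      field_simp
      ring
    obtain ⟨P₀, hP₀⟩ := Finset.card_eq_one.mp hb
    have hP₀mem : P₀ ∈ Sb := by rw [hP₀]; exact Finset.mem_singleton_self _
    have hP₀S := Finset.mem_filter.mp hP₀mem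
    refine ⟨hW, P₀, (mem_ptsFinset.mp hP₀S.1).1, (mem_ptsFinset.mp hP₀S.1).2, hP₀S.2,
      fun Q h1 h2 hne => ?_⟩
    have hQS : Q ∈ S := mem_ptsFinset.mpr ⟨h1, h2⟩
    rcases hwts Q h1 with h | h | h | h
    · exact h
    · exfalso
      have : Q ∈ Sc := Finset.mem_filter.mpr ⟨hQS, h⟩
      rw [Finset.card_eq_zero.mp hc] at this
      exact absurd this (Finset.notMem_empty Q)
    · exfalso
      have : Q ∈ Sb := Finset.mem_filter.mpr ⟨hQS, h⟩
      rw [hP₀] at this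
      exact hne (Finset.mem_singleton.mp this)
    · exfalso
      have : Q ∈ Sa := Finset.mem_filter.mpr ⟨hQS, h⟩
      rw [Finset.card_eq_zero.mp ha] at this
      exact absurd this (Finset.notMem_empty Q)
  · -- all (q+1)-weight
    right; right; left
    have hW : subWeight wt L = 1 := by
      rw [hsum_eq, ha, hb, hc, hd, hr1, hr2, hr3, hr4]
      push_cast
      field_simp
      ring
    refine ⟨hW, fun P h1 h2 => ?_⟩
    have hPS : P ∈ S := mem_ptsFinset.mpr ⟨h1, h2⟩
    have : P ∈ Sb := by
      have hSbeq : Sb = S := Finset.eq_of_subset_of_card_le (Finset.filter_subset _ _)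
        (by omega)
      rw [hSbeq]; exact hPS
    exact (Finset.mem_filter.mp this).2
  · -- q points of weight 1/q, one of weight 0
    right; right; right
    have hW : subWeight wt L = 1 := by
      rw [hsum_eq, ha, hb, hc, hd, hr1, hr2, hr3, hr4]
      push_cast
      field_simp
      ring
    obtain ⟨P₀, hP₀⟩ := Finset.card_eq_one.mp hc
    have hP₀mem : P₀ ∈ Sc := by rw [hP₀]; exact Finset.mem_singleton_self _
    have hP₀S := Finset.mem_filter.mp hP₀mem
    refine ⟨hW, P₀, (mem_ptsFinset.mp hP₀S.1).1, (mem_ptsFinset.mp hP₀S.1).2, hP₀S.2,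
      fun Q h1 h2 hne => ?_⟩
    have hQS : Q ∈ S := mem_ptsFinset.mpr ⟨h1, h2⟩
    rcases hwts Q h1 with h | h | h | h
    · exfalso
      have : Q ∈ Sd := Finset.mem_filter.mpr ⟨hQS, h⟩
      rw [Finset.card_eq_zero.mp hd] at this
      exact absurd this (Finset.notMem_empty Q)
    · exfalso
      have : Q ∈ Sc := Finset.mem_filter.mpr ⟨hQS, h⟩
      rw [hP₀] at this
      exact hne (Finset.mem_singleton.mp this)
    · exfalso
      have : Q ∈ Sb := Finset.mem_filter.mpr ⟨hQS, h⟩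
      rw [Finset.card_eq_zero.mp hb] at this
      exact absurd this (Finset.notMem_empty Q)
    · exact h
  
end Shapes

section Hyp

open scoped Classical

variable {F V : Type} [Field F] [Fintype F] [AddCommGroup V] [Module F V]
  [FiniteDimensional F V]

lemma CL_build_hyperplane {n : ℕ} (hn : 2 ≤ n) (hdim : finrank F V = n)
    (gp : Submodule F V → Prop) (P₀ : Submodule F V) (hP₀ : finrank F P₀ = 1)
    (hP₀g : ¬ gp P₀)
    (hclosed : ∀ R₁ R₂ R₃ : Submodule F V, finrank F R₁ = 1 → finrank F R₂ = 1 →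
      finrank F R₃ = 1 → R₁ ≠ R₂ → gp R₁ → gp R₂ → R₃ ≤ R₁ ⊔ R₂ → gp R₃)
    (hmeet : ∀ Q : Submodule F V, finrank F Q = 1 → Q ≠ P₀ → ¬ gp Q →
      ∃ R : Submodule F V, finrank F R = 1 ∧ R ≤ P₀ ⊔ Q ∧ R ≠ P₀ ∧ gp R) :
    ∃ H : Submodule F V, finrank F H = n - 1 ∧
      (∀ Q : Submodule F V, finrank F Q = 1 → (Q ≤ H ↔ gp Q)) := by
  have hadd : ∀ a b : V, (a = 0 ∨ gp (Submodule.span F {a})) →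
      (b = 0 ∨ gp (Submodule.span F {b})) → (a + b = 0 ∨ gp (Submodule.span F {a + b})) := by
    intro a b ha hb
    by_cases ha0 : a = 0
    · subst ha0; rw [zero_add]; exact hb
    by_cases hb0 : b = 0
    · subst hb0; rw [add_zero]; exact ha
    replace ha : gp (Submodule.span F {a}) := ha.resolve_left ha0
    replace hb : gp (Submodule.span F {b}) := hb.resolve_left hb0
    by_cases hab : a + b = 0
    · exact Or.inl hab
    right
    by_cases hs : Submodule.span F {a} = Submodule.span F {b}
    · have hbmem : b ∈ Submodule.span F {a} := by
        rw [hs]; exact Submodule.mem_span_singleton_self b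
      have habmem : a + b ∈ Submodule.span F {a} :=
        Submodule.add_mem _ (Submodule.mem_span_singleton_self a) hbmem
      have := point_eq_span (finrank_span_singleton ha0) habmem hab
      rw [← this]; exact ha
    · refine hclosed (Submodule.span F {a}) (Submodule.span F {b}) (Submodule.span F {a + b})
        (finrank_span_singleton ha0) (finrank_span_singleton hb0)
        (finrank_span_singleton hab) hs ha hb ?_
      rw [Submodule.span_singleton_le_iff_mem]
      exact Submodule.add_mem _
        (Submodule.mem_sup_left (Submodule.mem_span_singleton_self a))
        (Submodule.mem_sup_right (Submodule.mem_span_singleton_self b))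
  set H : Submodule F V :=
    { carrier := {v : V | v = 0 ∨ gp (Submodule.span F {v})}
      zero_mem' := Or.inl rfl
      add_mem' := fun {a b} ha hb => hadd a b ha hb
      smul_mem' := by
        rintro c v (rfl | hv)
        · exact Or.inl (smul_zero c)
        by_cases hc : c = 0
        · exact Or.inl (by rw [hc, zero_smul])
        · exact Or.inr (by
            rw [Submodule.span_singleton_smul_eq (IsUnit.mk0 c hc)]
            exact hv) } with hHdef
  have hmemH : ∀ v : V, v ∈ H ↔ (v = 0 ∨ gp (Submodule.span F {v})) := fun v => Iff.rfl
  have hQH : ∀ Q : Submodule F V, finrank F Q = 1 → (Q ≤ H ↔ gp Q) := by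
    intro Q hQ
    constructor
    · intro hle
      obtain ⟨v, hv, hv0⟩ := point_exists_ne_zero hQ
      have := (hmemH v).mp (hle hv)
      rcases this with rfl | h
      · exact absurd rfl hv0
      · rw [point_eq_span hQ hv hv0]; exact h
    · intro hgp v hv
      rw [hmemH]
      by_cases hv0 : v = 0
      · exact Or.inl hv0
      · exact Or.inr (by rw [← point_eq_span hQ hv hv0]; exact hgp)
  have hP₀H : ¬ P₀ ≤ H := fun h => hP₀g ((hQH P₀ hP₀).mp h)
  have hsup : P₀ ⊔ H = ⊤ := by
    rw [eq_top_iff]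
    intro v _
    by_cases hvH : v ∈ H
    · exact Submodule.mem_sup_right hvH
    have hv0 : v ≠ 0 := fun h => hvH (h ▸ H.zero_mem)
    set Q : Submodule F V := Submodule.span F {v} with hQdef
    have hQ1 : finrank F Q = 1 := finrank_span_singleton hv0
    have hvQ : v ∈ Q := Submodule.mem_span_singleton_self v
    have hQg : ¬ gp Q := by
      intro h
      exact hvH ((hmemH v).mpr (Or.inr h))
    by_cases hQP : Q = P₀
    · exact Submodule.mem_sup_left (hQP ▸ hvQ)
    obtain ⟨R, hR1, hRle, hRP, hRg⟩ := hmeet Q hQ1 hQP hQg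
    have h2 : finrank F (P₀ ⊔ Q : Submodule F V) = 2 :=
      sup_points_line hP₀ hQ1 (fun h => hQP h.symm)
    have h2' : finrank F (P₀ ⊔ R : Submodule F V) = 2 :=
      sup_points_line hP₀ hR1 (fun h => hRP h.symm)
    have heq : (P₀ ⊔ R : Submodule F V) = P₀ ⊔ Q := by
      apply Submodule.eq_of_le_of_finrank_le
      · exact sup_le le_sup_left hRle
      · omega
    have hvsup : v ∈ (P₀ ⊔ Q : Submodule F V) := Submodule.mem_sup_right hvQ
    rw [← heq] at hvsup
    have : (P₀ ⊔ R : Submodule F V) ≤ P₀ ⊔ H :=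
      sup_le_sup_left ((hQH R hR1).mpr hRg) P₀
    exact this hvsup
  refine ⟨H, ?_, hQH⟩
  have h1 := Submodule.finrank_sup_add_finrank_inf_eq P₀ H
  rw [hsup, finrank_top, hdim, hP₀] at h1
  have h2 : finrank F (P₀ ⊓ H : Submodule F V) ≤ 1 := by
    rw [← hP₀]; exact Submodule.finrank_mono inf_le_left
  have h3 : finrank F H < n := by
    rw [← hdim]
    exact Submodule.finrank_lt (fun h : H = ⊤ => hP₀H (by rw [h]; exact le_top))
  omega

end Hyp

open scoped Classical in
/-- If every line has weight in `{0,1}` and every point weight lies in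
`{-1/(q²+q), 0, 1/(q+1), 1/q}` (`n ≥ 4`), then the family `Y` of weight-1 lines is
trivial. -/
theorem stmt_9 (q n : ℕ) (F V : Type) [Field F] [Fintype F] (hq : Fintype.card F = q)
    [AddCommGroup V] [Module F V] (hn : 4 ≤ n) (hdim : finrank F V = n)
    (wt : Submodule F V → ℝ) (Y : Set (Submodule F V)) (hY : Y ⊆ allLines F V)
    (hbool : ∀ L : Submodule F V, finrank F L = 2 →
      subWeight wt L = if L ∈ Y then 1 else 0)
    (hwts : ∀ P : Submodule F V, finrank F P = 1 →
      wt P = -(1 / (q ^ 2 + q : ℝ)) ∨ wt P = 0 ∨ wt P = 1 / ((q : ℝ) + 1) ∨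
        wt P = 1 / (q : ℝ)) :
    IsTrivialCL Y := by
  haveI : FiniteDimensional F V := FiniteDimensional.of_finrank_pos (by rw [hdim]; omega)
  have hq2 : 2 ≤ q := hq ▸ Fintype.one_lt_card
  have hqR : (2 : ℝ) ≤ (q : ℝ) := by exact_mod_cast hq2
  have hq0 : (0 : ℝ) < q := by linarith
  have h12 : -(1 / (q ^ 2 + q : ℝ)) < 0 := by
    simp only [neg_lt, neg_zero]; positivity
  have h23 : (0 : ℝ) < 1 / ((q : ℝ) + 1) := by positivity
  have h34 : 1 / ((q : ℝ) + 1) < 1 / (q : ℝ) := by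
    apply one_div_lt_one_div_of_lt hq0; linarith
  have hbool' : ∀ L : Submodule F V, finrank F L = 2 →
      subWeight wt L = 0 ∨ subWeight wt L = 1 := by
    intro L hL
    rw [hbool L hL]
    split
    · right; rfl
    · left; rfl
  have hYiff : ∀ L : Submodule F V, finrank F L = 2 → (L ∈ Y ↔ subWeight wt L = 1) := by
    intro L hL
    constructor
    · intro h; rw [hbool L hL, if_pos h]
    · intro h
      by_contra h'
      rw [hbool L hL, if_neg h'] at h
      norm_num at h
  have shapes := fun (L : Submodule F V) (hL : finrank F L = 2) =>
    CL_line_shapes hq wt hwts hL (hbool' L hL)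
  have hpt2 : ∀ L : Submodule F V, finrank F L = 2 → ∀ P₀ : Submodule F V,
      ∃ Q : Submodule F V, finrank F Q = 1 ∧ Q ≤ L ∧ Q ≠ P₀ := by
    intro L hL P₀
    have hc := card_ptsFinset hq hL
    obtain ⟨Pa, hPa, Pb, hPb, hne⟩ := Finset.one_lt_card.mp
      (show 1 < (ptsFinset L).card by omega)
    by_cases h : Pa = P₀
    · exact ⟨Pb, (mem_ptsFinset.mp hPb).1, (mem_ptsFinset.mp hPb).2,
        by rw [← h]; exact hne.symm⟩
    · exact ⟨Pa, (mem_ptsFinset.mp hPa).1, (mem_ptsFinset.mp hPa).2, h⟩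
  have hpt1 : ∀ L : Submodule F V, finrank F L = 2 →
      ∃ P : Submodule F V, finrank F P = 1 ∧ P ≤ L := by
    intro L hL
    obtain ⟨P, h1, h2, _⟩ := hpt2 L hL ⊥
    exact ⟨P, h1, h2⟩
  by_cases hA : ∃ P : Submodule F V, finrank F P = 1 ∧ wt P = 1 / (q : ℝ)
  · -- Case A: exists a point of weight 1/q;  Y = complement of lines of a hyperplane
    obtain ⟨A₀, hA₀1, hA₀w⟩ := hA
    have shapeA : ∀ L : Submodule F V, finrank F L = 2 →
        (∃ P : Submodule F V, finrank F P = 1 ∧ P ≤ L ∧ wt P = 1 / (q : ℝ)) →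
        subWeight wt L = 1 ∧ ∃ P₀ : Submodule F V, finrank F P₀ = 1 ∧ P₀ ≤ L ∧
          wt P₀ = 0 ∧ ∀ Q : Submodule F V, finrank F Q = 1 → Q ≤ L → Q ≠ P₀ →
            wt Q = 1 / (q : ℝ) := by
      intro L hL ⟨P, hP1, hPle, hPw⟩
      rcases shapes L hL with ⟨_, hall⟩ | ⟨_, P₀, _, _, hw0, hrest⟩ | ⟨_, hall⟩ | hs
      · exfalso; have := hall P hP1 hPle; linarith
      · exfalso
        by_cases h : P = P₀
        · rw [h] at hPw; linarith
        · have := hrest P hP1 hPle h; linarith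
      · exfalso; have := hall P hP1 hPle; linarith
      · exact hs
    have hAC : ∀ Q : Submodule F V, finrank F Q = 1 →
        wt Q = 1 / (q : ℝ) ∨ wt Q = 0 := by
      intro Q h1
      by_cases hQA : Q = A₀
      · left; rw [hQA]; exact hA₀w
      have hL2 : finrank F (A₀ ⊔ Q : Submodule F V) = 2 :=
        sup_points_line hA₀1 h1 (fun h => hQA h.symm)
      obtain ⟨_, P₀, hP1, hPle, hPw, hrest⟩ := shapeA _ hL2 ⟨A₀, hA₀1, le_sup_left, hA₀w⟩
      by_cases h : Q = P₀
      · right; rw [h]; exact hPw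
      · left; exact hrest Q h1 le_sup_right h
    obtain ⟨H, hHrank, hQH⟩ := CL_build_hyperplane (show 2 ≤ n by omega) hdim
      (fun R => wt R = 0) A₀ hA₀1 (by intro h; have h' : wt A₀ = 0 := h; rw [hA₀w] at h'; linarith)
      (by -- closed
        intro R₁ R₂ R₃ h₁ h₂ h₃ hne hg₁ hg₂ hle
        have hL2 : finrank F (R₁ ⊔ R₂ : Submodule F V) = 2 := sup_points_line h₁ h₂ hne
        rcases shapes _ hL2 with ⟨_, hall⟩ | ⟨_, P₀, _, _, hw0, hrest⟩ | ⟨_, hall⟩ |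
          ⟨_, P₀, _, _, hw0, hrest⟩
        · exact hall R₃ h₃ hle
        · exfalso
          by_cases h : R₁ = P₀
          · rw [h] at hg₁; linarith
          · have := hrest R₁ h₁ le_sup_left h; linarith
        · exfalso; have := hall R₁ h₁ le_sup_left; linarith
        · exfalso
          have hR₁ : R₁ = P₀ := by
            by_contra h
            have := hrest R₁ h₁ le_sup_left h; linarith
          have hR₂ : R₂ = P₀ := by
            by_contra h
            have := hrest R₂ h₂ le_sup_right h; linarith
          exact hne (hR₁.trans hR₂.symm))
      (by -- meet
        intro Q h1 hQA hQg
        have hQw : wt Q = 1 / (q : ℝ) := (hAC Q h1).resolve_right hQg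
        have hL2 : finrank F (A₀ ⊔ Q : Submodule F V) = 2 :=
          sup_points_line hA₀1 h1 (fun h => hQA h.symm)
        obtain ⟨_, P₀, hP1, hPle, hPw, _⟩ := shapeA _ hL2 ⟨A₀, hA₀1, le_sup_left, hA₀w⟩
        refine ⟨P₀, hP1, hPle, ?_, hPw⟩
        intro h
        rw [h, hA₀w] at hPw
        linarith)
    refine ⟨linesIn H, Or.inr (Or.inr (Or.inl ⟨H, by rw [hdim]; exact hHrank, rfl⟩)),
      Or.inr ?_⟩
    ext L
    constructor
    · intro hLY
      have hL2 : finrank F L = 2 := hY hLY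
      refine ⟨hY hLY, ?_⟩
      rintro ⟨_, hLH⟩
      have hsum0 : subWeight wt L = 0 := by
        rw [subWeight_eq_sum]
        apply Finset.sum_eq_zero
        intro P hP
        obtain ⟨hP1, hPle⟩ := mem_ptsFinset.mp hP
        exact (hQH P hP1).mp (hPle.trans hLH)
      have := (hYiff L hL2).mp hLY
      linarith
    · rintro ⟨hLall, hLnot⟩
      have hL2 : finrank F L = 2 := hLall
      have hLH : ¬ L ≤ H := fun h => hLnot ⟨hL2, h⟩
      obtain ⟨v, hvL, hvH⟩ := SetLike.not_le_iff_exists.mp hLH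
      have hv0 : v ≠ 0 := fun h => hvH (h ▸ H.zero_mem)
      have hQ1 : finrank F (Submodule.span F {v}) = 1 := finrank_span_singleton hv0
      have hQle : Submodule.span F {v} ≤ L := by
        rw [Submodule.span_singleton_le_iff_mem]; exact hvL
      have hQw : wt (Submodule.span F {v}) = 1 / (q : ℝ) := by
        rcases hAC _ hQ1 with h | h
        · exact h
        · exact absurd (Submodule.mem_span_singleton_self v)
            (fun hm => hvH (((hQH _ hQ1).mpr h) hm))
      have := (shapeA L hL2 ⟨_, hQ1, hQle, hQw⟩).1
      exact (hYiff L hL2).mpr this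
  by_cases hD : ∃ P : Submodule F V, finrank F P = 1 ∧ wt P = -(1 / (q ^ 2 + q : ℝ))
  · -- Case D: exists a point of negative weight;  Y = lines of a hyperplane
    obtain ⟨D₀, hD₀1, hD₀w⟩ := hD
    have shapeD : ∀ L : Submodule F V, finrank F L = 2 →
        (∃ P : Submodule F V, finrank F P = 1 ∧ P ≤ L ∧ wt P = -(1 / (q ^ 2 + q : ℝ))) →
        subWeight wt L = 0 ∧ ∃ P₀ : Submodule F V, finrank F P₀ = 1 ∧ P₀ ≤ L ∧
          wt P₀ = 1 / ((q : ℝ) + 1) ∧ ∀ Q : Submodule F V, finrank F Q = 1 → Q ≤ L →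
            Q ≠ P₀ → wt Q = -(1 / (q ^ 2 + q : ℝ)) := by
      intro L hL ⟨P, hP1, hPle, hPw⟩
      rcases shapes L hL with ⟨_, hall⟩ | hs | ⟨_, hall⟩ | ⟨_, P₀, _, _, hw0, hrest⟩
      · exfalso; have := hall P hP1 hPle; linarith
      · exact hs
      · exfalso; have := hall P hP1 hPle; linarith
      · exfalso
        by_cases h : P = P₀
        · rw [h] at hPw; linarith
        · have := hrest P hP1 hPle h; linarith
    have hDC : ∀ Q : Submodule F V, finrank F Q = 1 →
        wt Q = 1 / ((q : ℝ) + 1) ∨ wt Q = -(1 / (q ^ 2 + q : ℝ)) := by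
      intro Q h1
      by_cases hQD : Q = D₀
      · right; rw [hQD]; exact hD₀w
      have hL2 : finrank F (D₀ ⊔ Q : Submodule F V) = 2 :=
        sup_points_line hD₀1 h1 (fun h => hQD h.symm)
      obtain ⟨_, P₀, hP1, hPle, hPw, hrest⟩ := shapeD _ hL2 ⟨D₀, hD₀1, le_sup_left, hD₀w⟩
      by_cases h : Q = P₀
      · left; rw [h]; exact hPw
      · right; exact hrest Q h1 le_sup_right h
    obtain ⟨H, hHrank, hQH⟩ := CL_build_hyperplane (show 2 ≤ n by omega) hdim
      (fun R => wt R = 1 / ((q : ℝ) + 1)) D₀ hD₀1 (by intro h; have h' : wt D₀ = 1 / ((q : ℝ) + 1) := h; rw [hD₀w] at h'; linarith)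
      (by -- closed
        intro R₁ R₂ R₃ h₁ h₂ h₃ hne hg₁ hg₂ hle
        have hL2 : finrank F (R₁ ⊔ R₂ : Submodule F V) = 2 := sup_points_line h₁ h₂ hne
        rcases shapes _ hL2 with ⟨_, hall⟩ | ⟨_, P₀, _, _, hw0, hrest⟩ | ⟨_, hall⟩ |
          ⟨_, P₀, _, _, hw0, hrest⟩
        · exfalso; have := hall R₁ h₁ le_sup_left; linarith
        · exfalso
          have hR₁ : R₁ = P₀ := by
            by_contra h
            have := hrest R₁ h₁ le_sup_left h; linarith
          have hR₂ : R₂ = P₀ := by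
            by_contra h
            have := hrest R₂ h₂ le_sup_right h; linarith
          exact hne (hR₁.trans hR₂.symm)
        · exact hall R₃ h₃ hle
        · exfalso
          by_cases h : R₁ = P₀
          · rw [h] at hg₁; linarith
          · have := hrest R₁ h₁ le_sup_left h; linarith)
      (by -- meet
        intro Q h1 hQD hQg
        have hQw : wt Q = -(1 / (q ^ 2 + q : ℝ)) := (hDC Q h1).resolve_left hQg
        have hL2 : finrank F (D₀ ⊔ Q : Submodule F V) = 2 :=
          sup_points_line hD₀1 h1 (fun h => hQD h.symm)
        obtain ⟨_, P₀, hP1, hPle, hPw, _⟩ := shapeD _ hL2 ⟨D₀, hD₀1, le_sup_left, hD₀w⟩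
        refine ⟨P₀, hP1, hPle, ?_, hPw⟩
        intro h
        rw [h, hD₀w] at hPw
        linarith)
    refine ⟨linesIn H, Or.inr (Or.inr (Or.inl ⟨H, by rw [hdim]; exact hHrank, rfl⟩)),
      Or.inl ?_⟩
    ext L
    constructor
    · intro hLY
      have hL2 : finrank F L = 2 := hY hLY
      refine ⟨hL2, ?_⟩
      by_contra hLH
      obtain ⟨v, hvL, hvH⟩ := SetLike.not_le_iff_exists.mp hLH
      have hv0 : v ≠ 0 := fun h => hvH (h ▸ H.zero_mem)
      have hQ1 : finrank F (Submodule.span F {v}) = 1 := finrank_span_singleton hv0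
      have hQle : Submodule.span F {v} ≤ L := by
        rw [Submodule.span_singleton_le_iff_mem]; exact hvL
      have hQw : wt (Submodule.span F {v}) = -(1 / (q ^ 2 + q : ℝ)) := by
        rcases hDC _ hQ1 with h | h
        · exact absurd (Submodule.mem_span_singleton_self v)
            (fun hm => hvH (((hQH _ hQ1).mpr h) hm))
        · exact h
      have hs0 := (shapeD L hL2 ⟨_, hQ1, hQle, hQw⟩).1
      have h1' := (hYiff L hL2).mp hLY
      rw [hs0] at h1'
      exact absurd h1' (by norm_num)
    · rintro ⟨hL2, hLH⟩
      have hallB : ∀ P : Submodule F V, finrank F P = 1 → P ≤ L →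
          wt P = 1 / ((q : ℝ) + 1) := by
        intro P h1 h2
        exact (hQH P h1).mp (h2.trans hLH)
      rcases shapes L hL2 with ⟨_, hall⟩ | ⟨_, P₀, hP1, hPle, hw0, hrest⟩ | ⟨hs1, _⟩ |
        ⟨_, P₀, hP1, hPle, hw0, hrest⟩
      · exfalso
        obtain ⟨P, h1, h2⟩ := hpt1 L hL2
        have := hall P h1 h2
        have := hallB P h1 h2
        linarith
      · exfalso
        obtain ⟨Q, h1, h2, h3⟩ := hpt2 L hL2 P₀
        have := hrest Q h1 h2 h3
        have := hallB Q h1 h2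
        linarith
      · exact (hYiff L hL2).mpr hs1
      · exfalso
        have := hallB P₀ hP1 hPle
        linarith
  -- Now no point of weight 1/q and none of weight -(1/(q²+q))
  by_cases hB : ∃ P : Submodule F V, finrank F P = 1 ∧ wt P = 1 / ((q : ℝ) + 1)
  · -- all points have weight 1/(q+1); Y is everything
    obtain ⟨B₀, hB₀1, hB₀w⟩ := hB
    have hallB : ∀ Q : Submodule F V, finrank F Q = 1 → wt Q = 1 / ((q : ℝ) + 1) := by
      intro Q h1
      rcases hwts Q h1 with h | h | h | h
      · exact absurd ⟨Q, h1, h⟩ hD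
      · exfalso
        have hQB : Q ≠ B₀ := by
          intro he; rw [he, hB₀w] at h; linarith
        have hL2 : finrank F (B₀ ⊔ Q : Submodule F V) = 2 :=
          sup_points_line hB₀1 h1 (fun he => hQB he.symm)
        rcases shapes _ hL2 with ⟨_, hall⟩ | ⟨_, P₀, hP1, hPle, hw0, hrest⟩ | ⟨_, hall⟩ |
          ⟨_, P₀, hP1, hPle, hw0, hrest⟩
        · have := hall B₀ hB₀1 le_sup_left; linarith
        · by_cases he : Q = P₀
          · rw [he] at h; linarith
          · have := hrest Q h1 le_sup_right he; linarith
        · have := hall Q h1 le_sup_right; linarith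
        · by_cases he : B₀ = P₀
          · rw [he] at hB₀w; linarith
          · have := hrest B₀ hB₀1 le_sup_left he; linarith
      · exact h
      · exact absurd ⟨Q, h1, h⟩ hA
    refine ⟨∅, Or.inl rfl, Or.inr ?_⟩
    rw [Set.diff_empty]
    apply Set.Subset.antisymm hY
    intro L hL2
    have hL2' : finrank F L = 2 := hL2
    rcases shapes L hL2' with ⟨_, hall⟩ | ⟨_, P₀, hP1, hPle, hw0, hrest⟩ | ⟨hs1, _⟩ |
      ⟨_, P₀, hP1, hPle, hw0, hrest⟩
    · exfalso
      obtain ⟨P, h1, h2⟩ := hpt1 L hL2'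
      have := hall P h1 h2
      have := hallB P h1
      linarith
    · exfalso
      obtain ⟨Q, h1, h2, h3⟩ := hpt2 L hL2' P₀
      have := hrest Q h1 h2 h3
      have := hallB Q h1
      linarith
    · exact (hYiff L hL2').mpr hs1
    · exfalso
      have := hallB P₀ hP1
      linarith
  · -- all points have weight 0; Y is empty
    have hallC : ∀ Q : Submodule F V, finrank F Q = 1 → wt Q = 0 := by
      intro Q h1
      rcases hwts Q h1 with h | h | h | h
      · exact absurd ⟨Q, h1, h⟩ hD
      · exact h
      · exact absurd ⟨Q, h1, h⟩ hB
      · exact absurd ⟨Q, h1, h⟩ hA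
    refine ⟨∅, Or.inl rfl, Or.inl ?_⟩
    rw [Set.eq_empty_iff_forall_notMem]
    intro L hLY
    have hL2 : finrank F L = 2 := hY hLY
    have hsum0 : subWeight wt L = 0 := by
      rw [subWeight_eq_sum]
      apply Finset.sum_eq_zero
      intro P hP
      exact hallC P (mem_ptsFinset.mp hP).1
    have := (hYiff L hL2).mp hLY
    linarith
end

section
/- Let wt : points(V) → ℝ on an n-dimensional F_q-vector space with every line-weight in {0,1}. Then for every point P, the weights of all points of V are determined by which lines through a fixed 3-space containing P have weight 1 restricted to that 3-space; in particular, at most 2^(q²+q+1)·(q²+q+1) distinct point weights can occur in total. -/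
open Module

set_option linter.unusedSectionVars false
namespace Stmt12Aux

open Submodule Finset

variable {F V : Type} [Field F] [Fintype F] [AddCommGroup V] [Module F V]

instance instFiniteSub [FiniteDimensional F V] : Finite (Submodule F V) := by
  have : Finite V := Module.finite_of_finite F
  exact Finite.of_injective (fun L : Submodule F V => (L : Set V)) SetLike.coe_injective

variable [FiniteDimensional F V]

noncomputable def ptsF (L : Submodule F V) : Finset (Submodule F V) :=
  (Set.toFinite {P : Submodule F V | finrank F P = 1 ∧ P ≤ L}).toFinset

@[simp] lemma mem_ptsF {L P : Submodule F V} :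
    P ∈ ptsF L ↔ finrank F P = 1 ∧ P ≤ L := by simp [ptsF]

noncomputable def linesThruF (P W : Submodule F V) : Finset (Submodule F V) :=
  (Set.toFinite {L : Submodule F V | finrank F L = 2 ∧ P ≤ L ∧ L ≤ W}).toFinset

@[simp] lemma mem_linesThruF {P W L : Submodule F V} :
    L ∈ linesThruF P W ↔ finrank F L = 2 ∧ P ≤ L ∧ L ≤ W := by simp [linesThruF]

lemma subWeight_eq_sum (wt : Submodule F V → ℝ) (L : Submodule F V) :
    subWeight wt L = ∑ P ∈ ptsF L, wt P :=
  finsum_mem_eq_finite_toFinset_sum _ _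

lemma exists_span_of_finrank_one {P : Submodule F V} (hP : finrank F P = 1) :
    ∃ v : V, v ≠ 0 ∧ P = span F {v} := by
  have hPb : P ≠ ⊥ := by
    intro h; rw [h, finrank_bot] at hP; omega
  obtain ⟨v, hvP, hv0⟩ := Submodule.exists_mem_ne_zero_of_ne_bot hPb
  refine ⟨v, hv0, ?_⟩
  have h1 : span F {v} ≤ P := by simpa [span_le] using hvP
  exact (Submodule.eq_of_le_of_finrank_eq h1 (by rw [hP, finrank_span_singleton hv0])).symm

lemma nat_card_sub (L : Submodule F V) : Nat.card L = Fintype.card F ^ finrank F L := by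
  have : Finite V := Module.finite_of_finite F
  have : Fintype V := Fintype.ofFinite V
  classical
  rw [Nat.card_eq_fintype_card]
  exact card_eq_pow_finrank


lemma card_pts_aux (L : Submodule F V) :
    (Fintype.card F - 1) * (ptsF L).card + 1 = Fintype.card F ^ finrank F L := by
  classical
  have : Finite V := Module.finite_of_finite F
  have : Fintype V := Fintype.ofFinite V
  set q := Fintype.card F with hq
  have hq2 : 2 ≤ q := Fintype.one_lt_card
  set s : Finset V := (L : Set V).toFinset.erase 0 with hs
  have hscard : s.card = q ^ finrank F L - 1 := by
    rw [hs, Finset.card_erase_of_mem (by simp [L.zero_mem]), Set.toFinset_card]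
    have : Fintype.card (L : Set V) = Nat.card L := by
      rw [Nat.card_eq_fintype_card]; rfl
    rw [this, nat_card_sub]
  have hmap : ∀ v ∈ s, span F {v} ∈ ptsF L := by
    intro v hv
    rw [hs, Finset.mem_erase, Set.mem_toFinset] at hv
    exact mem_ptsF.2 ⟨finrank_span_singleton hv.1, by simpa [span_le] using hv.2⟩
  have := Finset.card_eq_sum_card_fiberwise hmap
  have hfib : ∀ P ∈ ptsF L, (s.filter fun v => span F {v} = P).card = q - 1 := by
    intro P hP
    obtain ⟨hP1, hPL⟩ := mem_ptsF.1 hP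
    have hfil : s.filter (fun v => span F {v} = P) = (P : Set V).toFinset.erase 0 := by
      ext v
      simp only [Finset.mem_filter, hs, Finset.mem_erase, Set.mem_toFinset, SetLike.mem_coe]
      constructor
      · rintro ⟨⟨hv0, _⟩, hsp⟩
        exact ⟨hv0, hsp ▸ Submodule.mem_span_singleton_self v⟩
      · rintro ⟨hv0, hvP⟩
        have h1 : span F {v} ≤ P := by simpa [span_le] using hvP
        refine ⟨⟨hv0, hPL hvP⟩, Submodule.eq_of_le_of_finrank_eq h1 ?_⟩
        rw [hP1, finrank_span_singleton hv0]
    rw [hfil, Finset.card_erase_of_mem (by simp [P.zero_mem]), Set.toFinset_card]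
    have : Fintype.card (P : Set V) = Nat.card P := by
      rw [Nat.card_eq_fintype_card]; rfl
    rw [this, nat_card_sub, hP1, pow_one]
  rw [Finset.sum_congr rfl hfib, Finset.sum_const, smul_eq_mul] at this
  rw [hscard] at this
  have h1 : 1 ≤ q ^ finrank F L := Nat.one_le_pow _ _ (by omega)
  rw [Nat.mul_comm] at this
  omega

lemma card_pts_line {L : Submodule F V} (hL : finrank F L = 2) :
    (ptsF L).card = Fintype.card F + 1 := by
  have h := card_pts_aux L
  rw [hL] at h
  have hq2 : 2 ≤ Fintype.card F := Fintype.one_lt_card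
  obtain ⟨r, hr⟩ : ∃ r, Fintype.card F = r + 2 := ⟨Fintype.card F - 2, by omega⟩
  have hr1 : Fintype.card F - 1 = r + 1 := by omega
  rw [hr1, hr] at h
  rw [hr]
  have hexp : (r + 2) ^ 2 = (r + 1) * (r + 2 + 1) + 1 := by ring
  have h2 : (r + 1) * (ptsF L).card = (r + 1) * (r + 2 + 1) := by omega
  have := Nat.eq_of_mul_eq_mul_left (by omega) h2
  omega

lemma card_pts_plane {W : Submodule F V} (hW : finrank F W = 3) :
    (ptsF W).card = Fintype.card F ^ 2 + Fintype.card F + 1 := by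
  have h := card_pts_aux W
  rw [hW] at h
  have hq2 : 2 ≤ Fintype.card F := Fintype.one_lt_card
  obtain ⟨r, hr⟩ : ∃ r, Fintype.card F = r + 2 := ⟨Fintype.card F - 2, by omega⟩
  have hr1 : Fintype.card F - 1 = r + 1 := by omega
  rw [hr1, hr] at h
  rw [hr]
  have hexp : (r + 2) ^ 3 = (r + 1) * ((r + 2) ^ 2 + (r + 2) + 1) + 1 := by ring
  have h2 : (r + 1) * (ptsF W).card = (r + 1) * ((r + 2) ^ 2 + (r + 2) + 1) := by omega
  have := Nat.eq_of_mul_eq_mul_left (by omega) h2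
  omega

lemma finrank_sup_points {P Q : Submodule F V} (hP : finrank F P = 1) (hQ : finrank F Q = 1)
    (hne : P ≠ Q) : finrank F (P ⊔ Q : Submodule F V) = 2 := by
  have h := Submodule.finrank_sup_add_finrank_inf_eq P Q
  rw [hP, hQ] at h
  have hinf : finrank F (P ⊓ Q : Submodule F V) = 0 := by
    by_contra h0
    have hle : finrank F (P ⊓ Q : Submodule F V) ≤ 1 := by
      have := Submodule.finrank_mono (inf_le_left : P ⊓ Q ≤ P)
      omega
    have h1 : finrank F (P ⊓ Q : Submodule F V) = 1 := by omega
    have hPeq : P ⊓ Q = P := Submodule.eq_of_le_of_finrank_eq inf_le_left (by omega)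
    have hQeq : P ⊓ Q = Q := Submodule.eq_of_le_of_finrank_eq inf_le_right (by omega)
    exact hne (hPeq ▸ hQeq)
  omega

lemma line_eq_sup {P Q L : Submodule F V} (hP : finrank F P = 1) (hQ : finrank F Q = 1)
    (hne : P ≠ Q) (hL : finrank F L = 2) (hPL : P ≤ L) (hQL : Q ≤ L) : L = P ⊔ Q :=
  (Submodule.eq_of_le_of_finrank_eq (sup_le hPL hQL)
    (by rw [finrank_sup_points hP hQ hne, hL])).symm

set_option maxHeartbeats 800000 in
lemma exists_two_points {L : Submodule F V} (hL : finrank F L = 2) :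
    ∃ P Q : Submodule F V, (finrank F P = 1 ∧ P ≤ L) ∧ (finrank F Q = 1 ∧ Q ≤ L)
      ∧ P ≠ Q ∧ P ⊔ Q = L := by
  classical
  obtain ⟨b⟩ : Nonempty (Basis (Fin 2) F L) := ⟨finBasisOfFinrankEq F L hL⟩
  have h0 : ((b 0 : L) : V) ≠ 0 := by simpa using b.ne_zero 0
  have h1 : ((b 1 : L) : V) ≠ 0 := by simpa using b.ne_zero 1
  have hne : span F {((b 0 : L) : V)} ≠ span F {((b 1 : L) : V)} := by
    intro heq
    have hmem : ((b 1 : L) : V) ∈ span F {((b 0 : L) : V)} := by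
      rw [heq]; exact Submodule.mem_span_singleton_self _
    obtain ⟨c, hc⟩ := Submodule.mem_span_singleton.1 hmem
    have hcL : c • (b 0) = b 1 := Subtype.ext (by simpa using hc)
    have h2 := congrArg (fun x => b.repr x 1) hcL
    simp [Basis.repr_self, Finsupp.single_apply] at h2
  exact ⟨_, _, ⟨finrank_span_singleton h0, by simpa [span_le] using (b 0).2⟩,
    ⟨finrank_span_singleton h1, by simpa [span_le] using (b 1).2⟩, hne,
    (line_eq_sup (finrank_span_singleton h0) (finrank_span_singleton h1) hne hL
      (by simpa [span_le] using (b 0).2) (by simpa [span_le] using (b 1).2)).symm⟩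

set_option linter.unnecessarySimpa false

lemma card_linesThruF {P W : Submodule F V} (hW : finrank F W = 3)
    (hP : finrank F P = 1) (hPW : P ≤ W) :
    (linesThruF P W).card = Fintype.card F + 1 := by
  classical
  set q := Fintype.card F with hq
  have hq2 : 2 ≤ q := Fintype.one_lt_card
  set s : Finset (Submodule F V) := (ptsF W).erase P with hs
  have hmap : ∀ Q ∈ s, P ⊔ Q ∈ linesThruF P W := by
    intro Q hQ
    rw [hs, Finset.mem_erase, mem_ptsF] at hQ
    exact mem_linesThruF.2 ⟨finrank_sup_points hP hQ.2.1 (Ne.symm hQ.1), le_sup_left,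
      sup_le hPW hQ.2.2⟩
  have hcard := Finset.card_eq_sum_card_fiberwise hmap
  have hfib : ∀ L ∈ linesThruF P W, (s.filter fun Q => P ⊔ Q = L).card = q := by
    intro L hL
    obtain ⟨hL2, hPL, hLW⟩ := mem_linesThruF.1 hL
    have hfil : s.filter (fun Q => P ⊔ Q = L) = (ptsF L).erase P := by
      ext Q
      simp only [Finset.mem_filter, hs, Finset.mem_erase, mem_ptsF]
      constructor
      · rintro ⟨⟨hQP, hQ1, _⟩, hsup⟩
        exact ⟨hQP, hQ1, hsup ▸ le_sup_right⟩
      · rintro ⟨hQP, hQ1, hQL⟩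
        exact ⟨⟨hQP, hQ1, le_trans hQL hLW⟩,
          (line_eq_sup hP hQ1 (Ne.symm hQP) hL2 hPL hQL).symm⟩
    rw [hfil, Finset.card_erase_of_mem (mem_ptsF.2 ⟨hP, hPL⟩), card_pts_line hL2]
    omega
  rw [Finset.sum_congr rfl hfib, Finset.sum_const, smul_eq_mul] at hcard
  rw [hs, Finset.card_erase_of_mem (mem_ptsF.2 ⟨hP, hPW⟩), card_pts_plane hW, ← hq] at hcard
  have hxy : (q + 1) * q = q ^ 2 + q := by ring
  have h2 : (linesThruF P W).card * q = (q + 1) * q := by omega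
  have := Nat.eq_of_mul_eq_mul_right (show 0 < q by omega) h2
  omega

lemma card_lines_le {W : Submodule F V} (hW : finrank F W = 3) :
    (linesThruF (⊥ : Submodule F V) W).card
      ≤ (Fintype.card F ^ 2 + Fintype.card F + 1) ^ 2 := by
  classical
  set f : Submodule F V → Submodule F V × Submodule F V := fun L =>
    if h : finrank F L = 2 then
      ((exists_two_points h).choose, (exists_two_points h).choose_spec.choose)
    else (⊥, ⊥) with hf
  have hspec : ∀ L : Submodule F V, ∀ h : finrank F L = 2,
      (finrank F (f L).1 = 1 ∧ (f L).1 ≤ L) ∧ (finrank F (f L).2 = 1 ∧ (f L).2 ≤ L)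
        ∧ (f L).1 ⊔ (f L).2 = L := by
    intro L h
    have hspec' := (exists_two_points h).choose_spec.choose_spec
    have hfst : (f L).1 = (exists_two_points h).choose := by rw [hf]; simp [dif_pos h]
    have hsnd : (f L).2 = (exists_two_points h).choose_spec.choose := by
      rw [hf]; simp [dif_pos h]
    rw [hfst, hsnd]
    exact ⟨hspec'.1, hspec'.2.1, hspec'.2.2.2⟩
  have hinj : Set.InjOn f (linesThruF (⊥ : Submodule F V) W) := by
    intro L1 h1 L2 h2 heq
    rw [Finset.mem_coe, mem_linesThruF] at h1 h2
    have s1 := (hspec L1 h1.1).2.2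
    have s2 := (hspec L2 h2.1).2.2
    rw [← s1, ← s2, heq]
  have hmaps : ∀ L ∈ linesThruF (⊥ : Submodule F V) W, f L ∈ ptsF W ×ˢ ptsF W := by
    intro L hL
    obtain ⟨hL2, _, hLW⟩ := mem_linesThruF.1 hL
    obtain ⟨⟨hp1, hp2⟩, ⟨hq1, hq2'⟩, _⟩ := hspec L hL2
    rw [Finset.mem_product]
    exact ⟨mem_ptsF.2 ⟨hp1, le_trans hp2 hLW⟩, mem_ptsF.2 ⟨hq1, le_trans hq2' hLW⟩⟩
  calc (linesThruF (⊥ : Submodule F V) W).card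
      ≤ (ptsF W ×ˢ ptsF W).card := Finset.card_le_card_of_injOn f hmaps hinj
    _ = (Fintype.card F ^ 2 + Fintype.card F + 1) ^ 2 := by
        rw [Finset.card_product, card_pts_plane hW]; ring

lemma sum_lines_all {W : Submodule F V} (hW : finrank F W = 3) (f : Submodule F V → ℝ) :
    ∑ L ∈ linesThruF (⊥ : Submodule F V) W, subWeight f L
      = (Fintype.card F + 1) * ∑ Q ∈ ptsF W, f Q := by
  classical
  have hcomm : (∑ L ∈ linesThruF (⊥ : Submodule F V) W, ∑ Q ∈ ptsF L, f Q)
      = ∑ Q ∈ ptsF W, ∑ L ∈ linesThruF Q W, f Q := by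
    refine Finset.sum_comm' ?_
    intro L Q
    simp only [mem_linesThruF, mem_ptsF, bot_le, true_and]
    constructor
    · rintro ⟨⟨hL2, hLW⟩, hQ1, hQL⟩
      exact ⟨⟨hL2, hQL, hLW⟩, hQ1, le_trans hQL hLW⟩
    · rintro ⟨⟨hL2, hQL, hLW⟩, hQ1, _⟩
      exact ⟨⟨hL2, hLW⟩, hQ1, hQL⟩
  simp only [subWeight_eq_sum]
  rw [hcomm]
  rw [Finset.mul_sum]
  refine Finset.sum_congr rfl ?_
  intro Q hQ
  obtain ⟨hQ1, hQW⟩ := mem_ptsF.1 hQ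
  rw [Finset.sum_const, card_linesThruF hW hQ1 hQW, nsmul_eq_mul]
  push_cast
  ring

lemma sum_lines_thru {P W : Submodule F V} (hW : finrank F W = 3)
    (hP : finrank F P = 1) (hPW : P ≤ W) (f : Submodule F V → ℝ) :
    ∑ L ∈ linesThruF P W, subWeight f L
      = Fintype.card F * f P + ∑ Q ∈ ptsF W, f Q := by
  classical
  have hcomm : (∑ L ∈ linesThruF P W, ∑ Q ∈ ptsF L, f Q)
      = ∑ Q ∈ ptsF W, ∑ L ∈ (linesThruF P W).filter (fun L => Q ≤ L), f Q := by
    refine Finset.sum_comm' ?_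
    intro L Q
    simp only [Finset.mem_filter, mem_linesThruF, mem_ptsF]
    constructor
    · rintro ⟨⟨hL2, hPL, hLW⟩, hQ1, hQL⟩
      exact ⟨⟨⟨hL2, hPL, hLW⟩, hQL⟩, hQ1, le_trans hQL hLW⟩
    · rintro ⟨⟨⟨hL2, hPL, hLW⟩, hQL⟩, hQ1, _⟩
      exact ⟨⟨hL2, hPL, hLW⟩, hQ1, hQL⟩
  simp only [subWeight_eq_sum]
  rw [hcomm]
  have hcard : ∀ Q ∈ ptsF W, ((linesThruF P W).filter (fun L => Q ≤ L)).card
      = if Q = P then Fintype.card F + 1 else 1 := by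
    intro Q hQ
    obtain ⟨hQ1, hQW⟩ := mem_ptsF.1 hQ
    by_cases hQP : Q = P
    · subst hQP
      rw [if_pos rfl, ← card_linesThruF hW hQ1 hQW]
      congr 1
      apply Finset.filter_true_of_mem
      intro L hL
      exact (mem_linesThruF.1 hL).2.1
    · rw [if_neg hQP]
      have : (linesThruF P W).filter (fun L => Q ≤ L) = {P ⊔ Q} := by
        ext L
        simp only [Finset.mem_filter, mem_linesThruF, Finset.mem_singleton]
        constructor
        · rintro ⟨⟨hL2, hPL, hLW⟩, hQL⟩
          exact line_eq_sup hP hQ1 (fun h => hQP h.symm) hL2 hPL hQL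
        · rintro rfl
          exact ⟨⟨finrank_sup_points hP hQ1 (fun h => hQP h.symm), le_sup_left,
            sup_le hPW hQW⟩, le_sup_right⟩
      rw [this, Finset.card_singleton]
  have hsum : ∀ Q ∈ ptsF W, (∑ L ∈ (linesThruF P W).filter (fun L => Q ≤ L), f Q)
      = f Q + (if Q = P then (Fintype.card F : ℝ) * f Q else 0) := by
    intro Q hQ
    rw [Finset.sum_const, hcard Q hQ, nsmul_eq_mul]
    by_cases hQP : Q = P
    · rw [if_pos hQP, if_pos hQP]; push_cast; ring
    · rw [if_neg hQP, if_neg hQP]; push_cast; ring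
  rw [Finset.sum_congr rfl hsum, Finset.sum_add_distrib,
    Finset.sum_ite_eq' (ptsF W) P (fun Q => (Fintype.card F : ℝ) * f Q),
    if_pos (mem_ptsF.2 ⟨hP, hPW⟩)]
  ring

lemma exists_step {U : Submodule F V} (h : finrank F U < finrank F V) :
    ∃ U' : Submodule F V, U ≤ U' ∧ finrank F U' = finrank F U + 1 := by
  have hUt : U ≠ ⊤ := by
    intro hU; rw [hU, finrank_top] at h; omega
  obtain ⟨v, -, hv⟩ := SetLike.exists_of_lt (lt_top_iff_ne_top.2 hUt : U < ⊤)
  have hv0 : v ≠ 0 := fun h0 => hv (h0 ▸ U.zero_mem)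
  refine ⟨U ⊔ span F {v}, le_sup_left, ?_⟩
  have hinf : U ⊓ span F {v} = ⊥ := by
    rw [eq_bot_iff]
    rintro x ⟨hxU, hxs⟩
    obtain ⟨c, rfl⟩ := Submodule.mem_span_singleton.1 hxs
    rcases eq_or_ne c 0 with rfl | hc
    · simp
    · refine absurd ?_ hv
      have := U.smul_mem c⁻¹ hxU
      rwa [smul_smul, inv_mul_cancel₀ hc, one_smul] at this
  have := Submodule.finrank_sup_add_finrank_inf_eq U (span F {v})
  rw [hinf, finrank_bot, finrank_span_singleton hv0] at this
  omega

lemma exists_plane (hV : 3 ≤ finrank F V) {P : Submodule F V} (hP : finrank F P = 1) :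
    ∃ W : Submodule F V, finrank F W = 3 ∧ P ≤ W := by
  obtain ⟨U2, hPU2, hU2⟩ := exists_step (U := P) (by omega)
  rw [hP] at hU2
  obtain ⟨W, hU2W, hW⟩ := exists_step (U := U2) (by omega)
  exact ⟨W, by omega, le_trans hPU2 hU2W⟩

lemma sum_01 {t : Finset (Submodule F V)} {g : Submodule F V → ℝ}
    (h : ∀ x ∈ t, g x = 0 ∨ g x = 1) :
    ∑ x ∈ t, g x = ((t.filter fun x => g x = 1).card : ℝ) := by
  classical
  rw [← Finset.sum_filter_add_sum_filter_not t (fun x => g x = 1)]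
  have h1 : ∑ x ∈ t.filter (fun x => g x = 1), g x
      = ((t.filter fun x => g x = 1).card : ℝ) := by
    rw [Finset.sum_congr rfl (fun x hx => (Finset.mem_filter.1 hx).2), Finset.sum_const,
      nsmul_eq_mul, mul_one]
  have h2 : ∑ x ∈ t.filter (fun x => ¬ g x = 1), g x = 0 := by
    refine Finset.sum_eq_zero ?_
    intro x hx
    obtain ⟨hxt, hx1⟩ := Finset.mem_filter.1 hx
    rcases h x hxt with h0 | h1' <;> tauto
  rw [h1, h2, add_zero]

lemma sq_add_one_le_two_pow {m : ℕ} (h : 5 ≤ m) : m ^ 2 + 1 ≤ 2 ^ m := by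
  induction m with
  | zero => omega
  | succ k ih =>
    rcases Nat.lt_or_ge k 5 with hk | hk
    · interval_cases k <;> simp_all <;> omega
    · have := ih (by omega)
      have hpow : 2 ^ (k + 1) = 2 * 2 ^ k := by ring
      have hk2 : 2 * k ≤ k ^ 2 := by nlinarith
      nlinarith

end Stmt12Aux

/-- If all line weights lie in `{0,1}`, then the weights of points inside any fixed
3-space are determined by the `{0,1}`-pattern of line weights of that 3-space, and
in total at most `2^(q²+q+1)·(q²+q+1)` distinct point weights can occur. -/
theorem stmt_12 (q n : ℕ) (F V : Type) [Field F] [Fintype F] (hq : Fintype.card F = q)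
    [AddCommGroup V] [Module F V] (hn : 3 ≤ n) (hdim : finrank F V = n)
    (wt : Submodule F V → ℝ)
    (hline : ∀ L : Submodule F V, finrank F L = 2 →
      subWeight wt L = 0 ∨ subWeight wt L = 1) :
    (∀ wt' : Submodule F V → ℝ,
      (∀ L : Submodule F V, finrank F L = 2 →
        subWeight wt' L = 0 ∨ subWeight wt' L = 1) →
      ∀ W : Submodule F V, finrank F W = 3 →
        (∀ L : Submodule F V, finrank F L = 2 → L ≤ W →
          (subWeight wt L = 1 ↔ subWeight wt' L = 1)) →
        ∀ P : Submodule F V, finrank F P = 1 → P ≤ W → wt' P = wt P) ∧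
    Nat.card {w : ℝ | ∃ P : Submodule F V, finrank F P = 1 ∧ wt P = w}
      ≤ 2 ^ (q ^ 2 + q + 1) * (q ^ 2 + q + 1) := by
  classical
  subst hq
  subst hdim
  have hFD : FiniteDimensional F V := FiniteDimensional.of_finrank_pos (by omega)
  have hq2 : 2 ≤ Fintype.card F := Fintype.one_lt_card
  have hc0 : (Fintype.card F : ℝ) ≠ 0 := by
    have : (0:ℝ) < Fintype.card F := by exact_mod_cast (by omega : 0 < Fintype.card F)
    exact ne_of_gt this
  have hc1 : (Fintype.card F : ℝ) + 1 ≠ 0 := by positivity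
  constructor
  · -- determination within a 3-space
    intro wt' hline' W hW hpat P hP hPW
    set g : Submodule F V → ℝ := fun Q => wt' Q - wt Q with hg
    have hsub : ∀ L : Submodule F V, subWeight g L = subWeight wt' L - subWeight wt L := by
      intro L
      simp only [Stmt12Aux.subWeight_eq_sum, hg, Finset.sum_sub_distrib]
    have hzero : ∀ L ∈ Stmt12Aux.linesThruF (⊥ : Submodule F V) W, subWeight g L = 0 := by
      intro L hL
      obtain ⟨hL2, -, hLW⟩ := Stmt12Aux.mem_linesThruF.1 hL
      have heq : subWeight wt' L = subWeight wt L := by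
        rcases hline L hL2 with h0 | h1
        · rcases hline' L hL2 with h0' | h1'
          · rw [h0, h0']
          · exact absurd ((hpat L hL2 hLW).2 h1') (by rw [h0]; norm_num)
        · rw [h1, (hpat L hL2 hLW).1 h1]
      rw [hsub, heq, sub_self]
    have hall := Stmt12Aux.sum_lines_all hW g
    rw [Finset.sum_eq_zero hzero] at hall
    have hS : (∑ Q ∈ Stmt12Aux.ptsF W, g Q) = 0 :=
      (mul_eq_zero.1 hall.symm).resolve_left hc1
    have hthru := Stmt12Aux.sum_lines_thru hW hP hPW g
    rw [Finset.sum_eq_zero (fun L hL => hzero L (by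
      obtain ⟨h1, h2, h3⟩ := Stmt12Aux.mem_linesThruF.1 hL
      exact Stmt12Aux.mem_linesThruF.2 ⟨h1, bot_le, h3⟩)), hS, add_zero] at hthru
    have hgP : g P = 0 := (mul_eq_zero.1 hthru.symm).resolve_left hc0
    have hgP' : wt' P - wt P = 0 := by rw [hg] at hgP; simpa using hgP
    linarith
  · -- global bound on the number of distinct point weights
    set m := Fintype.card F ^ 2 + Fintype.card F + 1 with hm
    have main : ∀ P : Submodule F V, finrank F P = 1 →
        ∃ a s : ℕ, a < Fintype.card F + 2 ∧ s < m ^ 2 + 1 ∧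
          wt P = ((a : ℝ) - (s : ℝ) / ((Fintype.card F : ℝ) + 1)) / (Fintype.card F : ℝ) := by
      intro P hP
      obtain ⟨W, hW, hPW⟩ := Stmt12Aux.exists_plane (by omega) hP
      refine ⟨((Stmt12Aux.linesThruF P W).filter fun L => subWeight wt L = 1).card,
        ((Stmt12Aux.linesThruF (⊥ : Submodule F V) W).filter fun L =>
          subWeight wt L = 1).card, ?_, ?_, ?_⟩
      · have h1 := Finset.card_filter_le (Stmt12Aux.linesThruF P W)
          (fun L => subWeight wt L = 1)
        rw [Stmt12Aux.card_linesThruF hW hP hPW] at h1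
        omega
      · have h1 := Finset.card_filter_le (Stmt12Aux.linesThruF (⊥ : Submodule F V) W)
          (fun L => subWeight wt L = 1)
        have h2 := Stmt12Aux.card_lines_le hW
        rw [← hm] at h2
        omega
      · have hthru := Stmt12Aux.sum_lines_thru hW hP hPW wt
        have hall := Stmt12Aux.sum_lines_all hW wt
        have h01 : ∀ L ∈ Stmt12Aux.linesThruF P W,
            subWeight wt L = 0 ∨ subWeight wt L = 1 :=
          fun L hL => hline L (Stmt12Aux.mem_linesThruF.1 hL).1
        have h01' : ∀ L ∈ Stmt12Aux.linesThruF (⊥ : Submodule F V) W,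
            subWeight wt L = 0 ∨ subWeight wt L = 1 :=
          fun L hL => hline L (Stmt12Aux.mem_linesThruF.1 hL).1
        rw [Stmt12Aux.sum_01 h01] at hthru
        rw [Stmt12Aux.sum_01 h01'] at hall
        set x := ∑ Q ∈ Stmt12Aux.ptsF W, wt Q with hx
        have hxeq : ((((Stmt12Aux.linesThruF (⊥ : Submodule F V) W).filter fun L =>
            subWeight wt L = 1).card : ℕ) : ℝ) / ((Fintype.card F : ℝ) + 1) = x := by
          rw [hall, mul_comm, mul_div_assoc, div_self hc1, mul_one]
        rw [hxeq, hthru, add_sub_cancel_right, mul_div_cancel_left₀ _ hc0]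
    set T := {w : ℝ | ∃ P : Submodule F V, finrank F P = 1 ∧ wt P = w} with hT
    have hmem : ∀ w : T, ∃ P : Submodule F V, finrank F P = 1 ∧ wt P = (w : ℝ) := fun w => w.2
    choose Pw hPw1 hPw2 using hmem
    choose a s ha hs heq using fun w : T => main (Pw w) (hPw1 w)
    have hinj : Function.Injective (fun w : T =>
        ((⟨a w, ha w⟩, ⟨s w, hs w⟩) : Fin (Fintype.card F + 2) × Fin (m ^ 2 + 1))) := by
      intro w1 w2 h
      simp only [Prod.mk.injEq, Fin.mk.injEq] at h
      have : wt (Pw w1) = wt (Pw w2) := by rw [heq w1, heq w2, h.1, h.2]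
      exact Subtype.ext (by rw [← hPw2 w1, ← hPw2 w2, this])
    have hcard := Nat.card_le_card_of_injective _ hinj
    have hprod : Nat.card (Fin (Fintype.card F + 2) × Fin (m ^ 2 + 1))
        = (Fintype.card F + 2) * (m ^ 2 + 1) := by
      simp [Nat.card_eq_fintype_card]
    rw [hprod] at hcard
    refine le_trans hcard ?_
    have hm5 : 5 ≤ m := by
      have h4 : 4 ≤ Fintype.card F ^ 2 := by nlinarith
      omega
    have h1 : Fintype.card F + 2 ≤ m := by
      have h4 : 1 ≤ Fintype.card F ^ 2 := Nat.one_le_pow _ _ (by omega)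
      omega
    have h2 : m ^ 2 + 1 ≤ 2 ^ m := Stmt12Aux.sq_add_one_le_two_pow hm5
    calc (Fintype.card F + 2) * (m ^ 2 + 1) ≤ m * 2 ^ m := Nat.mul_le_mul h1 h2
      _ = 2 ^ m * m := mul_comm _ _
end

section
/- Let wt : points(V) → ℝ, V an n-dimensional F_q-space, such that every line has weight in {0,1}. Let S₁,…,S_q be distinct hyperplanes of V all containing a common (n-2)-space T, with every point of S₁ of weight 0, and for each j ∈ {2,…,q} all points of S_j \ S₁ having constant weight w_j ∈ {0, 1/q}. If K is a line meeting T trivially and contained in the union of S₁,…,S_q together with one further line S' (disjoint from T outside one point) whose points outside S₁ have weight in {0,1/q}, then the number of j ∈ {2,…,q} with w_j = 1/q is 0 or q−1. -/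
open Module

lemma exists_gen {F V : Type} [Field F] [AddCommGroup V] [Module F V]
    (P : Submodule F V) (h1 : finrank F P = 1) :
    ∃ v : V, v ≠ 0 ∧ P = Submodule.span F {v} := by
  have : FiniteDimensional F P := .of_finrank_pos (by omega)
  obtain ⟨⟨v, hvP⟩, hv0, -⟩ := finrank_eq_one_iff'.mp h1
  have hv0' : v ≠ 0 := fun h => hv0 (by ext; exact h)
  refine ⟨v, hv0', ?_⟩
  have hle : Submodule.span F {v} ≤ P := Submodule.span_le.mpr (by simpa using hvP)
  exact (Submodule.eq_of_le_of_finrank_eq hle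
    (by rw [finrank_span_singleton hv0', h1])).symm

lemma point_inj_optionF {F V : Type} [Field F] [AddCommGroup V] [Module F V]
    [FiniteDimensional F V] (K : Submodule F V) (hK : finrank F K = 2) :
    ∃ f : {P : Submodule F V // finrank F P = 1 ∧ P ≤ K} → Option F,
      Function.Injective f := by
  classical
  let b : Basis (Fin 2) F K := finBasisOfFinrankEq F K hK
  have hgen : ∀ P : {P : Submodule F V // finrank F P = 1 ∧ P ≤ K},
      ∃ v : K, (v : V) ≠ 0 ∧ (P : Submodule F V) = Submodule.span F {(v : V)} := by
    rintro ⟨P, h1, hle⟩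
    obtain ⟨v, hv0, hsp⟩ := exists_gen P h1
    exact ⟨⟨v, hle (hsp ▸ Submodule.mem_span_singleton_self v)⟩, hv0, hsp⟩
  choose g hg0 hgsp using hgen
  refine ⟨fun P => if b.repr (g P) 0 = 0 then none else some (b.repr (g P) 1 / b.repr (g P) 0),
    fun P Q hPQ => ?_⟩
  dsimp only at hPQ
  have key : ∃ c : F, c ≠ 0 ∧ (g P : K) = c • (g Q : K) := by
    have hP0 : (g P : K) ≠ 0 := fun h => hg0 P (by rw [h]; rfl)
    have hQ0 : (g Q : K) ≠ 0 := fun h => hg0 Q (by rw [h]; rfl)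
    by_cases h0 : b.repr (g P) 0 = 0
    · rw [if_pos h0] at hPQ
      have h0' : b.repr (g Q) 0 = 0 := by
        by_contra h; rw [if_neg h] at hPQ; exact (Option.some_ne_none _ hPQ.symm).elim
      have h1 : b.repr (g P) 1 ≠ 0 := by
        intro h; apply hP0
        apply b.ext_elem_iff.mpr; intro i; fin_cases i <;> simp [h0, h]
      have h1' : b.repr (g Q) 1 ≠ 0 := by
        intro h; apply hQ0
        apply b.ext_elem_iff.mpr; intro i; fin_cases i <;> simp [h0', h]
      refine ⟨b.repr (g P) 1 / b.repr (g Q) 1, div_ne_zero h1 h1', ?_⟩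
      apply b.ext_elem_iff.mpr; intro i
      fin_cases i <;> simp [map_smul, h0, h0'] <;> field_simp
    · rw [if_neg h0] at hPQ
      have h0' : b.repr (g Q) 0 ≠ 0 := by
        intro h; rw [if_pos h] at hPQ; exact (Option.some_ne_none _ hPQ).elim
      rw [if_neg h0'] at hPQ
      have hslope : b.repr (g P) 1 / b.repr (g P) 0 = b.repr (g Q) 1 / b.repr (g Q) 0 :=
        Option.some_injective _ hPQ
      refine ⟨b.repr (g P) 0 / b.repr (g Q) 0, div_ne_zero h0 h0', ?_⟩
      apply b.ext_elem_iff.mpr; intro i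
      fin_cases i <;> simp [map_smul]
      · field_simp
      · field_simp at hslope ⊢; linear_combination hslope
  obtain ⟨c, hc0, hc⟩ := key
  have hcv : (g P : V) = c • (g Q : V) := by rw [hc]; rfl
  apply Subtype.ext
  rw [hgsp P, hgsp Q, hcv, Submodule.span_singleton_smul_eq (IsUnit.mk0 c hc0)]

/-- Claim 2 of the main proof: given `q` distinct hyperplanes `S 0, …, S (q-1)`
through a common `(n-2)`-space `T`, with all points of `S 0` of weight `0` and the
points of `S j \ S 0` of constant weight `w j ∈ {0, 1/q}`, and a line `K` meeting
`T` trivially whose extra point `R` (on none of the `S j`) has weight in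
`{0, 1/q}`, the number of `j ≠ 0` with `w j = 1/q` is `0` or `q - 1`. -/
theorem stmt_17 (q n : ℕ) [NeZero q] (F V : Type) [Field F] [Fintype F] (hq : Fintype.card F = q)
    [AddCommGroup V] [Module F V] (hn : 3 ≤ n) (hdim : finrank F V = n)
    (wt : Submodule F V → ℝ)
    (hline : ∀ L : Submodule F V, finrank F L = 2 →
      subWeight wt L = 0 ∨ subWeight wt L = 1)
    (T : Submodule F V) (hT : finrank F T = n - 2)
    (S : Fin q → Submodule F V) (hSdist : Function.Injective S)
    (hShyp : ∀ j, finrank F (S j) = n - 1) (hST : ∀ j, T ≤ S j)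
    (hS0 : ∀ P : Submodule F V, finrank F P = 1 → P ≤ S 0 → wt P = 0)
    (w : Fin q → ℝ) (hw : ∀ j, w j = 0 ∨ w j = 1 / (q : ℝ))
    (hSw : ∀ j, j ≠ 0 → ∀ P : Submodule F V, finrank F P = 1 →
      P ≤ S j → ¬ P ≤ S 0 → wt P = w j)
    (K : Submodule F V) (hK : finrank F K = 2) (hKT : K ⊓ T = ⊥)
    (R : Submodule F V) (hR : finrank F R = 1) (hRK : R ≤ K)
    (hRS : ∀ j, ¬ R ≤ S j) (hRw : wt R = 0 ∨ wt R = 1 / (q : ℝ)) :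
    Nat.card {j : Fin q // j ≠ 0 ∧ w j = 1 / (q : ℝ)} = 0 ∨
    Nat.card {j : Fin q // j ≠ 0 ∧ w j = 1 / (q : ℝ)} = q - 1 := by
  classical
  have hFD : FiniteDimensional F V := .of_finrank_pos (by rw [hdim]; omega)
  have hq1 : 1 ≤ q := NeZero.one_le
  have hqR : (0 : ℝ) < q := by exact_mod_cast Nat.pos_of_ne_zero (NeZero.ne q)
  -- K is not contained in any S j
  have hKS : ∀ j, ¬ K ≤ S j := fun j h => hRS j (hRK.trans h)
  -- finrank (K ⊔ S j) = n
  have hsup : ∀ j, finrank F ↥(K ⊔ S j) = n := by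
    intro j
    have h1 : finrank F ↥(K ⊔ S j) ≤ n := hdim ▸ Submodule.finrank_le _
    have h2 : S j < K ⊔ S j :=
      lt_of_le_of_ne le_sup_right (fun e => hKS j (e ▸ le_sup_left))
    have h3 := Submodule.finrank_lt_finrank_of_lt h2
    have h4 := hShyp j
    omega
  -- K ⊓ S j is a point
  have hinf : ∀ j, finrank F ↥(K ⊓ S j) = 1 := by
    intro j
    have h1 := Submodule.finrank_sup_add_finrank_inf_eq K (S j)
    have h2 := hsup j; have h3 := hShyp j
    omega
  -- S i ⊓ S j = T for i ≠ j
  have hSS : ∀ i j : Fin q, i ≠ j → S i ⊓ S j = T := by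
    intro i j hij
    have hne : S i ≠ S j := fun e => hij (hSdist e)
    have h2 : S i < S i ⊔ S j := by
      refine lt_of_le_of_ne le_sup_left (fun e => hne ?_)
      have : S j ≤ S i := e ▸ le_sup_right
      exact (Submodule.eq_of_le_of_finrank_eq this (by rw [hShyp, hShyp])).symm
    have h3 := Submodule.finrank_lt_finrank_of_lt h2
    have h4 : finrank F ↥(S i ⊔ S j) ≤ n := hdim ▸ Submodule.finrank_le _
    have h5 := Submodule.finrank_sup_add_finrank_inf_eq (S i) (S j)
    have h6 := hShyp i; have h7 := hShyp j
    have hle : T ≤ S i ⊓ S j := le_inf (hST i) (hST j)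
    exact (Submodule.eq_of_le_of_finrank_eq hle (by omega)).symm
  -- points K ⊓ S j are not in S 0 for j ≠ 0
  have hKSnotS0 : ∀ j : Fin q, j ≠ 0 → ¬ (K ⊓ S j ≤ S 0) := by
    intro j hj hle
    have h1 : K ⊓ S j ≤ K ⊓ T := by
      rw [← hSS 0 j (Ne.symm hj)]
      exact le_inf inf_le_left (le_inf hle inf_le_right)
    rw [hKT] at h1
    have := hinf j
    rw [le_bot_iff.mp h1] at this
    simp at this
  -- the points K ⊓ S j are pairwise distinct
  have hptinj : Function.Injective (fun j => K ⊓ S j) := by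
    intro i j e
    dsimp only at e
    by_contra hij
    have h1 : K ⊓ S i ≤ K ⊓ T := by
      rw [← hSS i j hij]
      refine le_inf inf_le_left (le_inf inf_le_right ?_)
      rw [e]; exact inf_le_right
    rw [hKT] at h1
    have := hinf i
    rw [le_bot_iff.mp h1] at this
    simp at this
  have hRne : ∀ j, R ≠ K ⊓ S j := fun j e => hRS j (e ▸ inf_le_right : R ≤ S j)
  -- the finset of points of K
  set img : Finset (Submodule F V) := Finset.image (fun j => K ⊓ S j) Finset.univ with himg
  have hRnotmem : R ∉ img := by
    simp only [himg, Finset.mem_image]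
    rintro ⟨j, -, e⟩
    exact hRne j e.symm
  set Fs : Finset (Submodule F V) := insert R img with hFs
  have hFscard : Fs.card = q + 1 := by
    rw [hFs, Finset.card_insert_of_notMem hRnotmem, himg,
      Finset.card_image_of_injective _ hptinj, Finset.card_univ, Fintype.card_fin]
  set pts : Set (Submodule F V) := {P : Submodule F V | finrank F P = 1 ∧ P ≤ K} with hpts
  have hsub : ↑Fs ⊆ pts := by
    intro P hP
    simp only [hFs, himg, Finset.coe_insert, Set.mem_insert_iff, Finset.coe_image,
      Set.mem_image, Finset.mem_coe, Finset.mem_univ] at hP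
    rcases hP with rfl | ⟨j, -, rfl⟩
    · exact ⟨hR, hRK⟩
    · exact ⟨hinf j, inf_le_left⟩
  obtain ⟨f, hf⟩ := point_inj_optionF K hK
  have hfinsub : Finite {P : Submodule F V // finrank F P = 1 ∧ P ≤ K} :=
    Finite.of_injective f hf
  have hfin : pts.Finite := Set.finite_coe_iff.mp hfinsub
  have hcard_le : pts.ncard ≤ q + 1 := by
    have h1 : Nat.card {P : Submodule F V // finrank F P = 1 ∧ P ≤ K}
        ≤ Nat.card (Option F) := Nat.card_le_card_of_injective f hf
    have h2 : Nat.card (Option F) = q + 1 := by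
      rw [Nat.card_eq_fintype_card, Fintype.card_option, hq]
    rw [← Nat.card_coe_set_eq]
    rw [h2] at h1
    exact h1
  have hpts_eq : pts = ↑Fs := by
    refine (Set.eq_of_subset_of_ncard_le hsub ?_ hfin).symm
    rw [Set.ncard_coe_finset, hFscard]
    exact hcard_le
  -- compute the weight of K
  have hwK : subWeight wt K = wt R + ∑ j : Fin q, wt (K ⊓ S j) := by
    rw [subWeight, ← hpts, hpts_eq, finsum_mem_coe_finset, hFs,
      Finset.sum_insert hRnotmem, himg,
      Finset.sum_image (fun i _ j _ e => hptinj e)]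
  have hw0 : wt (K ⊓ S 0) = 0 := hS0 _ (hinf 0) inf_le_right
  set A : Finset (Fin q) :=
    (Finset.univ.erase 0).filter (fun j => w j = 1 / (q:ℝ)) with hA
  have hsum2 : ∑ j : Fin q, wt (K ⊓ S j) = (A.card : ℝ) * (1 / q) := by
    rw [← Finset.add_sum_erase _ _ (Finset.mem_univ 0), hw0, zero_add]
    have : ∀ j ∈ Finset.univ.erase (0 : Fin q), wt (K ⊓ S j) = w j := by
      intro j hj
      have hj0 : j ≠ 0 := Finset.ne_of_mem_erase hj
      exact hSw j hj0 _ (hinf j) inf_le_right (hKSnotS0 j hj0)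
    rw [Finset.sum_congr rfl this,
      ← Finset.sum_filter_add_sum_filter_not (Finset.univ.erase 0) (fun j => w j = 1 / (q:ℝ))]
    have e1 : ∑ j ∈ (Finset.univ.erase 0).filter (fun j => w j = 1 / (q:ℝ)), w j
        = (A.card : ℝ) * (1/q) := by
      rw [Finset.sum_congr rfl (fun j hj => (Finset.mem_filter.mp hj).2), ← hA,
        Finset.sum_const, nsmul_eq_mul]
    have e2 : ∑ j ∈ (Finset.univ.erase 0).filter (fun j => ¬ w j = 1 / (q:ℝ)), w j = 0 := by
      refine Finset.sum_eq_zero (fun j hj => ?_)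
      rcases hw j with h | h
      · exact h
      · exact ((Finset.mem_filter.mp hj).2 h).elim
    rw [e1, e2, add_zero]
  -- identify Nat.card with A.card
  have hcard : Nat.card {j : Fin q // j ≠ 0 ∧ w j = 1 / (q : ℝ)} = A.card := by
    rw [Nat.card_eq_fintype_card, Fintype.card_subtype, hA]
    congr 1
    ext j
    simp [Finset.mem_erase, and_comm]
  have hAle : A.card ≤ q - 1 := by
    have h1 : A.card ≤ (Finset.univ.erase (0 : Fin q)).card :=
      Finset.card_le_card (Finset.filter_subset _ _)
    rwa [Finset.card_erase_of_mem (Finset.mem_univ 0), Finset.card_univ,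
      Fintype.card_fin] at h1
  rw [hcard]
  rw [hsum2] at hwK
  rcases hline K hK with h | h <;> rw [hwK] at h
  · left
    have hR0 : (0:ℝ) ≤ wt R := by rcases hRw with h' | h' <;> rw [h'] <;> positivity
    have hnn : (0:ℝ) ≤ (A.card : ℝ) * (1/q) := by positivity
    have hz : (A.card : ℝ) * (1/q) = 0 := by linarith
    have hz2 : (A.card : ℝ) = 0 :=
      (mul_eq_zero.mp hz).resolve_right (by positivity)
    exact_mod_cast hz2
  · right
    rcases hRw with h' | h' <;> rw [h'] at h
    · exfalso
      have h2 : (A.card : ℝ) = (q : ℝ) := by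
        have h3 : (A.card : ℝ) * (1/q) = 1 := by linarith
        field_simp at h3
        exact_mod_cast h3
      have h3 : A.card = q := by exact_mod_cast h2
      omega
    · have h2 : (A.card : ℝ) = (q : ℝ) - 1 := by
        have h3 : (A.card : ℝ) * (1/q) = 1 - 1/q := by linarith
        have h4 := congrArg (fun x : ℝ => x * q) h3
        have hq0 : (q : ℝ) ≠ 0 := ne_of_gt hqR
        field_simp at h4
        linarith
      have h3 : (A.card : ℝ) = ((q - 1 : ℕ) : ℝ) := by
        rw [h2, Nat.cast_sub hq1, Nat.cast_one]
      exact_mod_cast h3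
end
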